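/- arXiv:2001.01607 — 2 statements merged into one kernel-verified Lean document; each statement's English description precedes it below -/
import Mathlib

section
/- Let G be a (theta, triangle)-free graph and let W = (H, {u, v}) be a 2-wheel in G with uv ∉ E(G) that is not a nested wheel. Then every u-sector of H contains at most one neighbor of v, and every v-sector of H contains at most one neighbor of u. -/
open SimpleGraph

variable {V : Type} [Fintype V] [DecidableEq V]

/-- `p` is a chordless (induced) path in `G`: a path such that the only edges of `G`
between its vertices are the edges of the path. -/
def IsInducedPathW (G : SimpleGraph V) {a b : V} (p : G.Walk a b) : Prop :=
  p.IsPath ∧ ∀ u v : V, u ∈ p.support → v ∈ p.support → G.Adj u v → p.toSubgraph.Adj u v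

/-- A hole of length `n` in `G`: an induced (chordless) cycle of length `n ≥ 4`,
given by an injection of `ZMod n` into `G` whose adjacencies are exactly the consecutive ones. -/
def IsHoleEmb (G : SimpleGraph V) (n : ℕ) (f : ZMod n → V) : Prop :=
  4 ≤ n ∧ Function.Injective f ∧
    ∀ i j : ZMod n, G.Adj (f i) (f j) ↔ (j = i + 1 ∨ i = j + 1)

/-- `G` contains an even hole (induced even cycle of length at least 4). -/
def ContainsEvenHole (G : SimpleGraph V) : Prop :=
  ∃ (n : ℕ) (f : ZMod n → V), IsHoleEmb G n f ∧ Even n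

/-- `G` contains a square (hole of length 4). -/
def ContainsSquare (G : SimpleGraph V) : Prop :=
  ∃ f : ZMod 4 → V, IsHoleEmb G 4 f

/-- `G` contains a theta as an induced subgraph: three internally vertex-disjoint chordless
paths from `a` to `b`, each of length at least 2, with no edges between the paths other than
those incident to `a` or `b` specified by the paths. -/
def ContainsTheta (G : SimpleGraph V) : Prop :=
  ∃ (a b : V) (p₁ p₂ p₃ : G.Walk a b),
    (IsInducedPathW G p₁ ∧ IsInducedPathW G p₂ ∧ IsInducedPathW G p₃) ∧
    (2 ≤ p₁.length ∧ 2 ≤ p₂.length ∧ 2 ≤ p₃.length) ∧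
    (∀ w : V, ((w ∈ p₁.support ∧ w ∈ p₂.support) ∨ (w ∈ p₁.support ∧ w ∈ p₃.support) ∨
          (w ∈ p₂.support ∧ w ∈ p₃.support)) → (w = a ∨ w = b)) ∧
    (∀ u w : V, u ≠ a → u ≠ b → w ≠ a → w ≠ b →
      ((u ∈ p₁.support ∧ w ∈ p₂.support) ∨ (u ∈ p₁.support ∧ w ∈ p₃.support) ∨
       (u ∈ p₂.support ∧ w ∈ p₃.support)) → ¬G.Adj u w)

/-- `G` contains a prism as an induced subgraph. -/
def ContainsPrism (G : SimpleGraph V) : Prop :=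
  ∃ (a₁ b₁ a₂ b₂ a₃ b₃ : V) (p₁ : G.Walk a₁ b₁) (p₂ : G.Walk a₂ b₂) (p₃ : G.Walk a₃ b₃),
    (IsInducedPathW G p₁ ∧ IsInducedPathW G p₂ ∧ IsInducedPathW G p₃) ∧
    (1 ≤ p₁.length ∧ 1 ≤ p₂.length ∧ 1 ≤ p₃.length) ∧
    (G.Adj a₁ a₂ ∧ G.Adj a₂ a₃ ∧ G.Adj a₁ a₃) ∧
    (G.Adj b₁ b₂ ∧ G.Adj b₂ b₃ ∧ G.Adj b₁ b₃) ∧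
    (∀ w : V, ¬(w ∈ p₁.support ∧ w ∈ p₂.support) ∧ ¬(w ∈ p₁.support ∧ w ∈ p₃.support) ∧
          ¬(w ∈ p₂.support ∧ w ∈ p₃.support)) ∧
    (∀ u w : V, u ∈ p₁.support → w ∈ p₂.support → G.Adj u w →
      (u = a₁ ∧ w = a₂) ∨ (u = b₁ ∧ w = b₂)) ∧
    (∀ u w : V, u ∈ p₁.support → w ∈ p₃.support → G.Adj u w →
      (u = a₁ ∧ w = a₃) ∨ (u = b₁ ∧ w = b₃)) ∧
    (∀ u w : V, u ∈ p₂.support → w ∈ p₃.support → G.Adj u w →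
      (u = a₂ ∧ w = a₃) ∨ (u = b₂ ∧ w = b₃))

/-- `G` contains a pyramid as an induced subgraph. -/
def ContainsPyramid (G : SimpleGraph V) : Prop :=
  ∃ (a b₁ b₂ b₃ : V) (p₁ : G.Walk a b₁) (p₂ : G.Walk a b₂) (p₃ : G.Walk a b₃),
    (IsInducedPathW G p₁ ∧ IsInducedPathW G p₂ ∧ IsInducedPathW G p₃) ∧
    (1 ≤ p₁.length ∧ 1 ≤ p₂.length ∧ 1 ≤ p₃.length) ∧
    ((2 ≤ p₁.length ∧ 2 ≤ p₂.length) ∨ (2 ≤ p₁.length ∧ 2 ≤ p₃.length) ∨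
     (2 ≤ p₂.length ∧ 2 ≤ p₃.length)) ∧
    (G.Adj b₁ b₂ ∧ G.Adj b₂ b₃ ∧ G.Adj b₁ b₃) ∧
    (∀ w : V, ((w ∈ p₁.support ∧ w ∈ p₂.support) ∨ (w ∈ p₁.support ∧ w ∈ p₃.support) ∨
          (w ∈ p₂.support ∧ w ∈ p₃.support)) → w = a) ∧
    (∀ u w : V, u ∈ p₁.support → w ∈ p₂.support → u ≠ a → w ≠ a → G.Adj u w →
      u = b₁ ∧ w = b₂) ∧
    (∀ u w : V, u ∈ p₁.support → w ∈ p₃.support → u ≠ a → w ≠ a → G.Adj u w →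
      u = b₁ ∧ w = b₃) ∧
    (∀ u w : V, u ∈ p₂.support → w ∈ p₃.support → u ≠ a → w ≠ a → G.Adj u w →
      u = b₂ ∧ w = b₃)

/-- `G` contains the cube as an induced subgraph: a hole of length 6 together with
two non-adjacent vertices `u, v` outside it, `u` adjacent to the even positions and
`v` adjacent to the odd positions. -/
def ContainsCube (G : SimpleGraph V) : Prop :=
  ∃ (f : ZMod 6 → V) (u v : V), IsHoleEmb G 6 f ∧
    u ∉ Set.range f ∧ v ∉ Set.range f ∧ ¬G.Adj u v ∧
    (∀ m : ZMod 6, G.Adj u (f m) ↔ (m = 0 ∨ m = 2 ∨ m = 4)) ∧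
    (∀ m : ZMod 6, G.Adj v (f m) ↔ (m = 1 ∨ m = 3 ∨ m = 5))

/-- `G` contains an even wheel: a hole plus a vertex outside it having at least 3 and
an even number of neighbors on the hole. -/
def ContainsEvenWheel (G : SimpleGraph V) : Prop :=
  ∃ (n : ℕ) (f : ZMod n → V) (u : V), IsHoleEmb G n f ∧ u ∉ Set.range f ∧
    3 ≤ {m : ZMod n | G.Adj u (f m)}.ncard ∧ Even {m : ZMod n | G.Adj u (f m)}.ncard

/-- `G` contains a butterfly: a wheel `(H,v)` with `N_H(v) = {a,b,c,d}`,
`ab, cd ∈ E(G)` and `bc, da ∉ E(G)`. -/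
def ContainsButterfly (G : SimpleGraph V) : Prop :=
  ∃ (n : ℕ) (f : ZMod n → V) (u : V), IsHoleEmb G n f ∧ u ∉ Set.range f ∧
    ∃ i j : ZMod n, i ≠ j ∧ i ≠ j + 1 ∧ i + 1 ≠ j ∧ i + 1 ≠ j + 1 ∧
      ¬G.Adj (f (i + 1)) (f j) ∧ ¬G.Adj (f (j + 1)) (f i) ∧
      (∀ m : ZMod n, G.Adj u (f m) ↔ (m = i ∨ m = i + 1 ∨ m = j ∨ m = j + 1))

/-- A 2-wheel in `G`: a hole `f` together with two distinct centers `u, v` outside the hole,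
each having at least three neighbors on the hole. -/
def Is2WheelCfg (G : SimpleGraph V) (n : ℕ) (f : ZMod n → V) (u v : V) : Prop :=
  IsHoleEmb G n f ∧ u ≠ v ∧ u ∉ Set.range f ∧ v ∉ Set.range f ∧
  3 ≤ {m : ZMod n | G.Adj u (f m)}.ncard ∧ 3 ≤ {m : ZMod n | G.Adj v (f m)}.ncard

/-- The 2-wheel `(f, {u,v})` is nested: the hole splits at `f i` and `f (i+d)` into two arcs,
with all neighbors of `u` on one arc and all neighbors of `v` on the other. -/
def NestedCfg (G : SimpleGraph V) (n : ℕ) (f : ZMod n → V) (u v : V) : Prop :=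
  ∃ (i : ZMod n) (d : ℕ), 1 ≤ d ∧ d < n ∧
    (∀ m : ZMod n, G.Adj u (f m) → ∃ e : ℕ, e ≤ d ∧ m = i + (e : ZMod n)) ∧
    (∀ m : ZMod n, G.Adj v (f m) → ∃ e : ℕ, e ≤ n - d ∧ m = i + (d : ZMod n) + (e : ZMod n))

/-- The 2-wheel `(f, {u,v})` is the cube. -/
def CubeCfg (G : SimpleGraph V) (n : ℕ) (f : ZMod n → V) (u v : V) : Prop :=
  n = 6 ∧ ∃ i : ZMod n,
    (∀ m : ZMod n, G.Adj u (f m) ↔ (m = i ∨ m = i + 2 ∨ m = i + 4)) ∧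
    (∀ m : ZMod n, G.Adj v (f m) ↔ (m = i + 1 ∨ m = i + 3 ∨ m = i + 5))

/-- The 2-wheel `(f, {u,v})` is a cousin wheel: `N_H(u) = {h₁,h₂,h₃}` and
`N_H(v) = {h₂,h₃,h₄}` for four consecutive vertices of the hole (or with `u, v` swapped). -/
def CousinCfg (G : SimpleGraph V) (n : ℕ) (f : ZMod n → V) (u v : V) : Prop :=
  (∃ i : ZMod n,
    (∀ m : ZMod n, G.Adj u (f m) ↔ (m = i ∨ m = i + 1 ∨ m = i + 2)) ∧
    (∀ m : ZMod n, G.Adj v (f m) ↔ (m = i + 1 ∨ m = i + 2 ∨ m = i + 3))) ∨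
  (∃ i : ZMod n,
    (∀ m : ZMod n, G.Adj v (f m) ↔ (m = i ∨ m = i + 1 ∨ m = i + 2)) ∧
    (∀ m : ZMod n, G.Adj u (f m) ↔ (m = i + 1 ∨ m = i + 2 ∨ m = i + 3)))

/-- A `u`-sector of the hole `f`: a subpath from `f i` to `f (i+d)` (`1 ≤ d < n`)
whose two ends are adjacent to `u` and whose internal vertices are not. -/
def IsSector (G : SimpleGraph V) (n : ℕ) (f : ZMod n → V) (u : V) (i : ZMod n) (d : ℕ) : Prop :=
  1 ≤ d ∧ d < n ∧ G.Adj u (f i) ∧ G.Adj u (f (i + (d : ZMod n))) ∧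
    ∀ m : ℕ, 0 < m → m < d → ¬G.Adj u (f (i + (m : ZMod n)))

/-- The class 𝒞: (theta, prism, pyramid, butterfly)-free graphs in which every 2-wheel
with non-adjacent centers is a nested wheel or a cousin wheel. -/
def InClassC (G : SimpleGraph V) : Prop :=
  ¬ContainsTheta G ∧ ¬ContainsPrism G ∧ ¬ContainsPyramid G ∧ ¬ContainsButterfly G ∧
  ∀ (n : ℕ) (f : ZMod n → V) (u v : V), Is2WheelCfg G n f u v → ¬G.Adj u v →
    (NestedCfg G n f u v ∨ CousinCfg G n f u v)

/-- `G` contains `S_{k,k,k}` as an induced subgraph: a root `r` and three legs of `k` edges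
each, with no other adjacencies among these vertices. -/
def ContainsSpider (G : SimpleGraph V) (k : ℕ) : Prop :=
  ∃ (r : V) (f : Fin 3 → Fin k → V),
    (∀ (j : Fin 3) (m : Fin k), f j m ≠ r) ∧
    (∀ (j₁ : Fin 3) (m₁ : Fin k) (j₂ : Fin 3) (m₂ : Fin k),
      f j₁ m₁ = f j₂ m₂ → j₁ = j₂ ∧ m₁ = m₂) ∧
    (∀ (j : Fin 3) (m : Fin k), G.Adj r (f j m) ↔ (m : ℕ) = 0) ∧
    (∀ (j₁ : Fin 3) (m₁ : Fin k) (j₂ : Fin 3) (m₂ : Fin k),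
      G.Adj (f j₁ m₁) (f j₂ m₂) ↔
        (j₁ = j₂ ∧ ((m₁ : ℕ) + 1 = (m₂ : ℕ) ∨ (m₂ : ℕ) + 1 = (m₁ : ℕ))))

/-- A `k`-span-wheel in `G`: a hole `f` of length `n`, with `x = f 0` and `y = f p`
non-adjacent, the two paths `P_A = f 0, f 1, …, f p` and `P_B = f 0, f (n-1), …, f p`,
and centers `c 0, …, c (k-1)` outside the hole such that `{c i} ∪ {x,y}` is independent,
every center has at least three neighbors on the hole and neighbors in the interiors of
both `P_A` and `P_B`, and the neighbors of the centers appear along both `P_A` and `P_B`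
(from `x` to `y`) in the order of the centers. -/
def IsSpanWheel (G : SimpleGraph V) (k n p : ℕ) (f : ZMod n → V) (c : Fin k → V) : Prop :=
  IsHoleEmb G n f ∧
  2 ≤ p ∧ p ≤ n - 2 ∧
  ¬G.Adj (f 0) (f (p : ZMod n)) ∧
  Function.Injective c ∧
  (∀ i : Fin k, c i ∉ Set.range f) ∧
  (∀ i j : Fin k, i ≠ j → ¬G.Adj (c i) (c j)) ∧
  (∀ i : Fin k, ¬G.Adj (c i) (f 0)) ∧
  (∀ i : Fin k, ¬G.Adj (c i) (f (p : ZMod n))) ∧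
  (∀ i : Fin k, 3 ≤ {m : ZMod n | G.Adj (c i) (f m)}.ncard) ∧
  (∀ i : Fin k, ∃ a : ℕ, 0 < a ∧ a < p ∧ G.Adj (c i) (f (a : ZMod n))) ∧
  (∀ i : Fin k, ∃ b : ℕ, p < b ∧ b < n ∧ G.Adj (c i) (f (b : ZMod n))) ∧
  (∀ i j : Fin k, i < j → ∀ a₁ a₂ : ℕ, a₁ ≤ p → a₂ ≤ p →
    G.Adj (c i) (f (a₁ : ZMod n)) → G.Adj (c j) (f (a₂ : ZMod n)) → a₁ ≤ a₂) ∧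
  (∀ i j : Fin k, i < j → ∀ b₁ b₂ : ℕ, p ≤ b₁ → b₁ ≤ n → p ≤ b₂ → b₂ ≤ n →
    G.Adj (c i) (f (b₁ : ZMod n)) → G.Adj (c j) (f (b₂ : ZMod n)) → b₂ ≤ b₁)

/-- `X` separates `s` from `t` in `G`: neither is in `X` and every walk from `s` to `t`
meets `X`. -/
def Separates (G : SimpleGraph V) (X : Set V) (s t : V) : Prop :=
  s ∉ X ∧ t ∉ X ∧ ∀ p : G.Walk s t, ∃ w ∈ p.support, w ∈ X

/-- `X` is a minimal separator of `G`: for some pair `s, t` it is an inclusion-wise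
minimal `st`-separator. -/
def MinSeparator (G : SimpleGraph V) (X : Set V) : Prop :=
  ∃ s t : V, Separates G X s t ∧ ∀ Y ⊆ X, Separates G Y s t → Y = X

/-- `A` is a connected component of `G ∖ C` that is full to `C`. -/
def IsFullComponent (G : SimpleGraph V) (C A : Set V) : Prop :=
  A.Nonempty ∧ Disjoint A C ∧ (G.induce A).Connected ∧
  (∀ a ∈ A, ∀ w : V, G.Adj a w → w ∈ A ∪ C) ∧
  (∀ x ∈ C, ∃ a ∈ A, G.Adj x a)

/-- A tree decomposition of `G` with tree `T` and bags `B`. -/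
def IsTreeDecomp (G : SimpleGraph V) {ι : Type} (T : SimpleGraph ι) (B : ι → Finset V) : Prop :=
  T.IsTree ∧
  (∀ v : V, ∃ i, v ∈ B i) ∧
  (∀ u v : V, G.Adj u v → ∃ i, u ∈ B i ∧ v ∈ B i) ∧
  (∀ (v : V) (i j : ι), v ∈ B i → v ∈ B j →
    ∀ (p : T.Walk i j), p.IsPath → ∀ x ∈ p.support, v ∈ B x)

/-- The treewidth of a finite graph: the least `w` such that `G` has a tree decomposition
all of whose bags have size at most `w + 1`. -/
noncomputable def treewidth (G : SimpleGraph V) : ℕ :=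
  sInf {w : ℕ | ∃ (m : ℕ) (T : SimpleGraph (Fin m)) (B : Fin m → Finset V),
    IsTreeDecomp G T B ∧ ∀ i, (B i).card ≤ w + 1}

/-- A graph is chordal iff it has no hole. -/
def IsChordal (G : SimpleGraph V) : Prop :=
  ¬∃ (n : ℕ) (f : ZMod n → V), IsHoleEmb G n f

/-- `H` is obtained from `G` by a minimal fill-in (minimal chordal completion). -/
def IsMinimalChordalCompletion (G H : SimpleGraph V) : Prop :=
  G ≤ H ∧ IsChordal H ∧ ∀ H' : SimpleGraph V, G ≤ H' → H' ≤ H → IsChordal H' → H' = H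

/-- `Ω` is a potential maximal clique of `G`: a maximal clique of some minimal chordal
completion of `G`. -/
def IsPMC (G : SimpleGraph V) (Ω : Set V) : Prop :=
  ∃ H : SimpleGraph V, IsMinimalChordalCompletion G H ∧ H.IsClique Ω ∧
    ∀ Ω' : Set V, H.IsClique Ω' → Ω ⊆ Ω' → Ω' = Ω

/-- `n` satisfies the Ramsey property for `(t, k)`: every graph on `n` vertices has a
clique of size `t` or an independent set of size `k`. -/
def RamseyProp (n t k : ℕ) : Prop :=
  ∀ G : SimpleGraph (Fin n),
    (∃ S : Finset (Fin n), G.IsNClique t S) ∨ (∃ S : Finset (Fin n), Gᶜ.IsNClique k S)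

/-- The Ramsey number `R(t, k)`. -/
noncomputable def ramseyNumber (t k : ℕ) : ℕ := sInf {n : ℕ | RamseyProp n t k}

namespace S4

variable {G : SimpleGraph V}

lemma noTri (hTri : G.CliqueFree 3) {a b c : V} (hab : G.Adj a b) (hac : G.Adj a c)
    (hbc : G.Adj b c) : False :=
  hTri {a, b, c} (SimpleGraph.is3Clique_triple_iff.mpr ⟨hab, hac, hbc⟩)

lemma subOfAdj_adj {x y a b : V} (h : G.Adj x y) :
    (G.subgraphOfAdj h).Adj a b ↔ ((x = a ∧ y = b) ∨ (x = b ∧ y = a)) := by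
  change s(x, y) = s(a, b) ↔ _
  rw [Sym2.eq_iff]

structure HoleIf (G : SimpleGraph V) (n : ℕ) (g : ℕ → V) (u v : V) : Prop where
  hn : 4 ≤ n
  inj : ∀ p q, p < n → q < n → g p = g q → p = q
  adj : ∀ p q, p < n → q < n →
    (G.Adj (g p) (g q) ↔ (q = p + 1 ∨ p = q + 1 ∨ (p = 0 ∧ q = n - 1) ∨ (q = 0 ∧ p = n - 1)))
  hu : ∀ m, m < n → u ≠ g m
  hv : ∀ m, m < n → v ≠ g m
  huv : ¬G.Adj u v
  hne : u ≠ v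

lemma HoleIf.symm {n : ℕ} {g : ℕ → V} {u v : V} (H : HoleIf G n g u v) : HoleIf G n g v u :=
  ⟨H.hn, H.inj, H.adj, H.hv, H.hu, fun h => H.huv h.symm, H.hne.symm⟩

lemma arc_exists {g : ℕ → V} (p L q : ℕ) (hq : q = p + L)
    (hadj : ∀ m, p ≤ m → m < p + L → G.Adj (g m) (g (m + 1)))
    (hinj : ∀ e₁ e₂, e₁ ≤ L → e₂ ≤ L → g (p + e₁) = g (p + e₂) → e₁ = e₂) :
    ∃ w : G.Walk (g p) (g q), w.length = L ∧ w.IsPath ∧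
      (∀ x, x ∈ w.support ↔ ∃ e, e ≤ L ∧ x = g (p + e)) ∧
      (∀ x y, w.toSubgraph.Adj x y ↔ ∃ e, e < L ∧
        ((x = g (p + e) ∧ y = g (p + e + 1)) ∨ (y = g (p + e) ∧ x = g (p + e + 1)))) := by
  induction L generalizing p q with
  | zero =>
    subst hq
    refine ⟨Walk.nil, rfl, Walk.IsPath.nil, ?_, ?_⟩
    · intro x
      simp only [Walk.support_nil, List.mem_singleton]
      constructor
      · intro h; exact ⟨0, le_rfl, by simpa using h⟩
      · rintro ⟨e, he, rfl⟩
        have : e = 0 := Nat.le_zero.mp he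
        subst this; simp
    · intro x y
      constructor
      · intro h; simp [Walk.toSubgraph] at h
      · rintro ⟨e, he, -⟩; omega
  | succ L ih =>
    obtain ⟨w', hlen, hpath, hsup, hts⟩ := ih (p + 1) q (by omega)
      (fun m hm hm' => hadj m (by omega) (by omega))
      (fun e₁ e₂ h1 h2 heq => by
        have h3 : g (p + (e₁ + 1)) = g (p + (e₂ + 1)) := by
          rw [show p + (e₁ + 1) = p + 1 + e₁ by omega, show p + (e₂ + 1) = p + 1 + e₂ by omega]
          exact heq
        have := hinj (e₁ + 1) (e₂ + 1) (by omega) (by omega) h3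
        omega)
    have hstep : G.Adj (g p) (g (p + 1)) := hadj p le_rfl (by omega)
    refine ⟨Walk.cons hstep w', by simp [hlen], ?_, ?_, ?_⟩
    · rw [Walk.cons_isPath_iff]
      refine ⟨hpath, fun hmem => ?_⟩
      obtain ⟨e, he, heq⟩ := (hsup (g p)).mp hmem
      have h3 : g (p + 0) = g (p + (e + 1)) := by
        rw [show p + (e + 1) = p + 1 + e by omega]
        simpa using heq
      have := hinj 0 (e + 1) (by omega) (by omega) h3
      omega
    · intro x
      simp only [Walk.support_cons, List.mem_cons]
      constructor
      · rintro (rfl | hmem)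
        · exact ⟨0, by omega, by simp⟩
        · obtain ⟨e, he, heq⟩ := (hsup x).mp hmem
          exact ⟨e + 1, by omega, by rw [heq]; congr 1; omega⟩
      · rintro ⟨e, he, rfl⟩
        rcases Nat.eq_zero_or_pos e with rfl | hpos
        · left; simp
        · right
          refine (hsup _).mpr ⟨e - 1, by omega, ?_⟩
          congr 1; omega
    · intro x y
      have gc : ∀ a b : ℕ, a = b → g a = g b := fun a b h => by rw [h]
      have hrw : (Walk.cons hstep w').toSubgraph.Adj x y ↔
          ((g p = x ∧ g (p + 1) = y) ∨ (g p = y ∧ g (p + 1) = x)) ∨ w'.toSubgraph.Adj x y := by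
        rw [show (Walk.cons hstep w').toSubgraph = G.subgraphOfAdj hstep ⊔ w'.toSubgraph from rfl,
          Subgraph.sup_adj, subOfAdj_adj]
      rw [hrw, hts]
      constructor
      · rintro ((⟨h1, h2⟩ | ⟨h1, h2⟩) | ⟨e, he, (⟨h1, h2⟩ | ⟨h1, h2⟩)⟩)
        · exact ⟨0, by omega, Or.inl ⟨by rw [← h1]; try exact gc _ _ (by omega),
            by rw [← h2]; try exact gc _ _ (by omega)⟩⟩
        · exact ⟨0, by omega, Or.inr ⟨by rw [← h1]; try exact gc _ _ (by omega),
            by rw [← h2]; try exact gc _ _ (by omega)⟩⟩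
        · exact ⟨e + 1, by omega, Or.inl ⟨by rw [h1]; try exact gc _ _ (by omega),
            by rw [h2]; try exact gc _ _ (by omega)⟩⟩
        · exact ⟨e + 1, by omega, Or.inr ⟨by rw [h1]; try exact gc _ _ (by omega),
            by rw [h2]; try exact gc _ _ (by omega)⟩⟩
      · rintro ⟨e, he, (⟨h1, h2⟩ | ⟨h1, h2⟩)⟩
        · rcases Nat.eq_zero_or_pos e with rfl | hpos
          · exact Or.inl (Or.inl ⟨by rw [h1]; try exact gc _ _ (by omega),
              by rw [h2]; try exact gc _ _ (by omega)⟩)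
          · exact Or.inr ⟨e - 1, by omega, Or.inl ⟨by rw [h1]; try exact gc _ _ (by omega),
              by rw [h2]; try exact gc _ _ (by omega)⟩⟩
        · rcases Nat.eq_zero_or_pos e with rfl | hpos
          · exact Or.inl (Or.inr ⟨by rw [h1]; try exact gc _ _ (by omega),
              by rw [h2]; try exact gc _ _ (by omega)⟩)
          · exact Or.inr ⟨e - 1, by omega, Or.inr ⟨by rw [h1]; try exact gc _ _ (by omega),
              by rw [h2]; try exact gc _ _ (by omega)⟩⟩

lemma HoleIf.arc {n : ℕ} {g : ℕ → V} {u v : V} (H : HoleIf G n g u v) (p L q : ℕ)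
    (hq : q = p + L) (hpl : p + L ≤ n - 2) :
    ∃ w : G.Walk (g p) (g q), w.length = L ∧ w.IsPath ∧
      (∀ x, x ∈ w.support ↔ ∃ e, e ≤ L ∧ x = g (p + e)) ∧
      (∀ x y, w.toSubgraph.Adj x y ↔ ∃ e, e < L ∧
        ((x = g (p + e) ∧ y = g (p + e + 1)) ∨ (y = g (p + e) ∧ x = g (p + e + 1)))) := by
  have hn := H.hn
  refine arc_exists p L q hq (fun m hm hm' => ?_) (fun e₁ e₂ h1 h2 heq => ?_)
  · exact (H.adj m (m + 1) (by omega) (by omega)).mpr (Or.inl rfl)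
  · have := H.inj (p + e₁) (p + e₂) (by omega) (by omega) heq
    omega

lemma HoleIf.adj_between {n : ℕ} {g : ℕ → V} {u v : V} (H : HoleIf G n g u v) {p q : ℕ}
    (hp : p ≤ n - 2) (hq : q ≤ n - 2) (h : G.Adj (g p) (g q)) : q = p + 1 ∨ p = q + 1 := by
  have hn := H.hn
  have := (H.adj p q (by omega) (by omega)).mp h
  omega

lemma inducedPathW_reverse {a b : V} {w : G.Walk a b} (h : IsInducedPathW G w) :
    IsInducedPathW G w.reverse := by
  refine ⟨h.1.reverse, fun x y hx hy hxy => ?_⟩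
  rw [Walk.toSubgraph_reverse]
  rw [Walk.support_reverse, List.mem_reverse] at hx hy
  exact h.2 x y hx hy hxy

lemma HoleIf.pathVU {n : ℕ} {g : ℕ → V} {u v : V} (H : HoleIf G n g u v) (p L : ℕ)
    (hpl : p + L ≤ n - 2)
    (hv0 : G.Adj v (g p)) (huL : G.Adj u (g (p + L)))
    (hvint : ∀ e, 0 < e → e ≤ L → ¬G.Adj v (g (p + e)))
    (huint : ∀ e, e < L → ¬G.Adj u (g (p + e))) :
    ∃ w : G.Walk v u, IsInducedPathW G w ∧ w.length = L + 2 ∧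
      (∀ x, x ∈ w.support ↔ (x = v ∨ x = u ∨ ∃ e, e ≤ L ∧ x = g (p + e))) := by
  have hn := H.hn
  obtain ⟨w₀, hlen, hpath, hsup, hts⟩ := H.arc p L (p + L) rfl hpl
  set w : G.Walk v u := Walk.cons hv0 (w₀.concat huL.symm) with hw
  have hsupp : ∀ x, x ∈ w.support ↔ (x = v ∨ x ∈ w₀.support ∨ x = u) := by
    intro x
    rw [hw]
    simp only [Walk.support_cons, Walk.support_concat, List.concat_eq_append, List.mem_cons,
      List.mem_append, List.mem_singleton]
    tauto
  have hnotin_u : u ∉ w₀.support := fun hmem => by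
    obtain ⟨e, he, heq⟩ := (hsup u).mp hmem
    exact H.hu (p + e) (by omega) heq
  have hnotin_v : v ∉ w₀.support := fun hmem => by
    obtain ⟨e, he, heq⟩ := (hsup v).mp hmem
    exact H.hv (p + e) (by omega) heq
  have hT : ∀ x y, w.toSubgraph.Adj x y ↔
      (((v = x ∧ g p = y) ∨ (v = y ∧ g p = x)) ∨ w₀.toSubgraph.Adj x y ∨
        ((g (p + L) = x ∧ u = y) ∨ (g (p + L) = y ∧ u = x))) := by
    intro x y
    rw [hw]
    rw [show (Walk.cons hv0 (w₀.concat huL.symm)).toSubgraph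
        = G.subgraphOfAdj hv0 ⊔ (w₀.concat huL.symm).toSubgraph from rfl]
    rw [Walk.concat_eq_append, Walk.toSubgraph_append]
    rw [show (Walk.cons huL.symm Walk.nil).toSubgraph
        = G.subgraphOfAdj huL.symm ⊔ G.singletonSubgraph u from rfl]
    simp only [Subgraph.sup_adj, subOfAdj_adj, singletonSubgraph_adj, Pi.bot_apply,
      Prop.bot_eq_false, or_false]
    try tauto
  have hpathw : w.IsPath := by
    rw [hw, Walk.cons_isPath_iff]
    constructor
    · rw [Walk.isPath_def, Walk.support_concat, List.nodup_append]
      refine ⟨(Walk.isPath_def _).mp hpath, List.nodup_singleton u, ?_⟩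
      intro x hx b hxu hxb
      rw [List.mem_singleton] at hxu
      subst hxu
      exact hnotin_u (hxb ▸ hx)
    · intro hmem
      rw [Walk.support_concat, List.mem_append, List.mem_singleton] at hmem
      rcases hmem with h | h
      · exact hnotin_v h
      · exact H.hne h.symm
  have hkey : ∀ x y, x ∈ w.support → y ∈ w.support → G.Adj x y → w.toSubgraph.Adj x y := by
    intro x y hx hy hxy
    rw [hsupp] at hx hy
    rw [hT]
    simp only [hsup] at hx hy
    rcases hx with rfl | hx
    · rcases hy with rfl | ⟨e, he, rfl⟩ | rfl
      · exact absurd rfl hxy.ne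
      · rcases Nat.eq_zero_or_pos e with rfl | hpos
        · exact Or.inl (Or.inl ⟨rfl, rfl⟩)
        · exact absurd hxy (hvint e hpos he)
      · exact absurd hxy (fun h => H.huv h.symm)
    rcases hx with ⟨e1, he1, rfl⟩ | rfl
    · rcases hy with rfl | ⟨e2, he2, rfl⟩ | rfl
      · rcases Nat.eq_zero_or_pos e1 with rfl | hpos
        · exact Or.inl (Or.inr ⟨rfl, rfl⟩)
        · exact absurd hxy (fun h => hvint e1 hpos he1 h.symm)
      · rcases H.adj_between (show p + e1 ≤ n - 2 by omega) (show p + e2 ≤ n - 2 by omega) hxy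
          with h | h
        · exact Or.inr (Or.inl ((hts _ _).mpr ⟨e1, by omega, Or.inl ⟨rfl, congrArg g h⟩⟩))
        · exact Or.inr (Or.inl ((hts _ _).mpr ⟨e2, by omega, Or.inr ⟨rfl, congrArg g h⟩⟩))
      · rcases Nat.lt_or_ge e1 L with hlt | hge
        · exact absurd hxy (fun h => huint e1 hlt h.symm)
        · have heL : e1 = L := by omega
          subst heL
          exact Or.inr (Or.inr (Or.inl ⟨rfl, rfl⟩))
    · rcases hy with rfl | ⟨e, he, rfl⟩ | rfl
      · exact absurd hxy H.huv
      · rcases Nat.lt_or_ge e L with hlt | hge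
        · exact absurd hxy (huint e hlt)
        · have heL : e = L := by omega
          subst heL
          exact Or.inr (Or.inr (Or.inr ⟨rfl, rfl⟩))
      · exact absurd rfl hxy.ne
  refine ⟨w, ⟨hpathw, hkey⟩, ?_, fun x => ?_⟩
  · rw [hw]
    simp only [Walk.length_cons, Walk.length_concat, hlen]
  · rw [hsupp]
    simp only [hsup]
    constructor
    · rintro (h | h | h)
      exacts [Or.inl h, Or.inr (Or.inr h), Or.inr (Or.inl h)]
    · rintro (h | h | h)
      exacts [Or.inl h, Or.inr (Or.inr h), Or.inr (Or.inl h)]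

lemma HoleIf.pathV {n : ℕ} {g : ℕ → V} {u v : V} (H : HoleIf G n g u v) (p L q : ℕ)
    (hq : q = p + L) (hpl : p + L ≤ n - 2)
    (hv0 : G.Adj v (g p))
    (hvint : ∀ e, 0 < e → e ≤ L → ¬G.Adj v (g (p + e))) :
    ∃ w : G.Walk v (g q), IsInducedPathW G w ∧ w.length = L + 1 ∧
      (∀ x, x ∈ w.support ↔ (x = v ∨ ∃ e, e ≤ L ∧ x = g (p + e))) := by
  have hn := H.hn
  subst hq
  obtain ⟨w₀, hlen, hpath, hsup, hts⟩ := H.arc p L (p + L) rfl hpl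
  set w : G.Walk v (g (p + L)) := Walk.cons hv0 w₀ with hw
  have hsupp : ∀ x, x ∈ w.support ↔ (x = v ∨ x ∈ w₀.support) := by
    intro x
    rw [hw]
    simp only [Walk.support_cons, List.mem_cons]
  have hnotin_v : v ∉ w₀.support := fun hmem => by
    obtain ⟨e, he, heq⟩ := (hsup v).mp hmem
    exact H.hv (p + e) (by omega) heq
  have hT : ∀ x y, w.toSubgraph.Adj x y ↔
      (((v = x ∧ g p = y) ∨ (v = y ∧ g p = x)) ∨ w₀.toSubgraph.Adj x y) := by
    intro x y
    rw [hw]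
    rw [show (Walk.cons hv0 w₀).toSubgraph = G.subgraphOfAdj hv0 ⊔ w₀.toSubgraph from rfl]
    simp only [Subgraph.sup_adj, subOfAdj_adj]
  have hpathw : w.IsPath := by
    rw [hw, Walk.cons_isPath_iff]
    exact ⟨hpath, hnotin_v⟩
  have hkey : ∀ x y, x ∈ w.support → y ∈ w.support → G.Adj x y → w.toSubgraph.Adj x y := by
    intro x y hx hy hxy
    rw [hsupp] at hx hy
    rw [hT]
    simp only [hsup] at hx hy
    rcases hx with rfl | ⟨e1, he1, rfl⟩
    · rcases hy with rfl | ⟨e, he, rfl⟩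
      · exact absurd rfl hxy.ne
      · rcases Nat.eq_zero_or_pos e with rfl | hpos
        · exact Or.inl (Or.inl ⟨rfl, rfl⟩)
        · exact absurd hxy (hvint e hpos he)
    · rcases hy with rfl | ⟨e2, he2, rfl⟩
      · rcases Nat.eq_zero_or_pos e1 with rfl | hpos
        · exact Or.inl (Or.inr ⟨rfl, rfl⟩)
        · exact absurd hxy (fun h => hvint e1 hpos he1 h.symm)
      · rcases H.adj_between (show p + e1 ≤ n - 2 by omega) (show p + e2 ≤ n - 2 by omega) hxy
          with h | h
        · exact Or.inr ((hts _ _).mpr ⟨e1, by omega, Or.inl ⟨rfl, congrArg g h⟩⟩)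
        · exact Or.inr ((hts _ _).mpr ⟨e2, by omega, Or.inr ⟨rfl, congrArg g h⟩⟩)
  refine ⟨w, ⟨hpathw, hkey⟩, ?_, fun x => by rw [hsupp]; simp only [hsup]⟩
  rw [hw]
  simp only [Walk.length_cons, hlen]

lemma HoleIf.pathV' {n : ℕ} {g : ℕ → V} {u v : V} (H : HoleIf G n g u v) (p L : ℕ)
    (hpl : p + L ≤ n - 2)
    (hvL : G.Adj v (g (p + L)))
    (hvint : ∀ e, e < L → ¬G.Adj v (g (p + e))) :
    ∃ w : G.Walk v (g p), IsInducedPathW G w ∧ w.length = L + 1 ∧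
      (∀ x, x ∈ w.support ↔ (x = v ∨ ∃ e, e ≤ L ∧ x = g (p + e))) := by
  have hn := H.hn
  obtain ⟨w₀, hlen, hpath, hsup, hts⟩ := H.arc p L (p + L) rfl hpl
  set w₁ : G.Walk (g p) v := w₀.concat hvL.symm with hw
  have hsupp : ∀ x, x ∈ w₁.support ↔ (x ∈ w₀.support ∨ x = v) := by
    intro x
    rw [hw]
    simp only [Walk.support_concat, List.concat_eq_append, List.mem_append, List.mem_singleton]
  have hnotin_v : v ∉ w₀.support := fun hmem => by
    obtain ⟨e, he, heq⟩ := (hsup v).mp hmem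
    exact H.hv (p + e) (by omega) heq
  have hT : ∀ x y, w₁.toSubgraph.Adj x y ↔
      (w₀.toSubgraph.Adj x y ∨ ((g (p + L) = x ∧ v = y) ∨ (g (p + L) = y ∧ v = x))) := by
    intro x y
    rw [hw, Walk.concat_eq_append, Walk.toSubgraph_append]
    rw [show (Walk.cons hvL.symm Walk.nil).toSubgraph
        = G.subgraphOfAdj hvL.symm ⊔ G.singletonSubgraph v from rfl]
    simp only [Subgraph.sup_adj, subOfAdj_adj, singletonSubgraph_adj, Pi.bot_apply,
      Prop.bot_eq_false, or_false]
  have hpathw : w₁.IsPath := by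
    rw [hw, Walk.isPath_def, Walk.support_concat, List.nodup_append]
    refine ⟨(Walk.isPath_def _).mp hpath, List.nodup_singleton v, ?_⟩
    intro x hx b hxv hxb
    rw [List.mem_singleton] at hxv
    subst hxv
    exact hnotin_v (hxb ▸ hx)
  have hkey : ∀ x y, x ∈ w₁.support → y ∈ w₁.support → G.Adj x y → w₁.toSubgraph.Adj x y := by
    intro x y hx hy hxy
    rw [hsupp] at hx hy
    rw [hT]
    simp only [hsup] at hx hy
    rcases hx with ⟨e1, he1, rfl⟩ | rfl
    · rcases hy with ⟨e2, he2, rfl⟩ | rfl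
      · rcases H.adj_between (show p + e1 ≤ n - 2 by omega) (show p + e2 ≤ n - 2 by omega) hxy
          with h | h
        · exact Or.inl ((hts _ _).mpr ⟨e1, by omega, Or.inl ⟨rfl, congrArg g h⟩⟩)
        · exact Or.inl ((hts _ _).mpr ⟨e2, by omega, Or.inr ⟨rfl, congrArg g h⟩⟩)
      · rcases Nat.lt_or_ge e1 L with hlt | hge
        · exact absurd hxy (fun h => hvint e1 hlt h.symm)
        · have heL : e1 = L := by omega
          subst heL
          exact Or.inr (Or.inl ⟨rfl, rfl⟩)
    · rcases hy with ⟨e2, he2, rfl⟩ | rfl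
      · rcases Nat.lt_or_ge e2 L with hlt | hge
        · exact absurd hxy (hvint e2 hlt)
        · have heL : e2 = L := by omega
          subst heL
          exact Or.inr (Or.inr ⟨rfl, rfl⟩)
      · exact absurd rfl hxy.ne
  refine ⟨w₁.reverse, inducedPathW_reverse ⟨hpathw, hkey⟩, ?_, fun x => ?_⟩
  · rw [Walk.length_reverse, hw]
    simp only [Walk.length_concat, hlen]
  · rw [Walk.support_reverse, List.mem_reverse, hsupp]
    simp only [hsup]
    exact or_comm
structure SectorHyp (G : SimpleGraph V) (n : ℕ) (g : ℕ → V) (u v : V) (d m₁ m₂ : ℕ) : Prop where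
  hd : d + 3 ≤ n
  h12 : m₁ + 2 ≤ m₂
  hm2d : m₂ ≤ d
  hu0 : G.Adj u (g 0)
  hud : G.Adj u (g d)
  huint : ∀ m, 0 < m → m < d → ¬G.Adj u (g m)
  hvm1 : G.Adj v (g m₁)
  hvm2 : G.Adj v (g m₂)
  hmin : ∀ m, m < m₁ → ¬G.Adj v (g m)
  hmax : ∀ m, m₂ < m → m ≤ d → ¬G.Adj v (g m)

lemma master {n : ℕ} {g : ℕ → V} {u v : V} {d m₁ m₂ : ℕ}
    (H : HoleIf G n g u v) (S : SectorHyp G n g u v d m₁ m₂)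
    {p L : ℕ} (hdp : d + 2 ≤ p) (hpL : p + L ≤ n - 2)
    (hvp : G.Adj v (g p)) (hupL : G.Adj u (g (p + L)))
    (hvarc : ∀ e, 0 < e → e ≤ L → ¬G.Adj v (g (p + e)))
    (huarc : ∀ e, e < L → ¬G.Adj u (g (p + e))) :
    ContainsTheta G := by
  have hn := H.hn
  obtain ⟨hd, h12, hm2d, hu0, hud, huint, hvm1, hvm2, hmin, hmax⟩ := S
  obtain ⟨w1, hi1, hl1, hs1⟩ := H.symm.pathVU 0 m₁ (by omega)
    hu0
    (by rw [Nat.zero_add]; exact hvm1)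
    (fun e he1 he2 => by rw [Nat.zero_add]; exact huint e he1 (by omega))
    (fun e he => by rw [Nat.zero_add]; exact hmin e (by omega))
  obtain ⟨w2, hi2, hl2, hs2⟩ := H.pathVU m₂ (d - m₂) (by omega)
    hvm2
    (by rw [show m₂ + (d - m₂) = d by omega]; exact hud)
    (fun e he1 he2 => hmax (m₂ + e) (by omega) (by omega))
    (fun e he => huint (m₂ + e) (by omega) (by omega))
  obtain ⟨w3, hi3, hl3, hs3⟩ := H.pathVU p L hpL hvp hupL hvarc huarc
  have hs1' : ∀ x, x ∈ w1.reverse.support ↔ (x = v ∨ x = u ∨ ∃ e, e ≤ m₁ ∧ x = g e) := by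
    intro x
    rw [Walk.support_reverse, List.mem_reverse, hs1]
    constructor
    · rintro (h | h | ⟨e, he, rfl⟩)
      exacts [Or.inr (Or.inl h), Or.inl h, Or.inr (Or.inr ⟨e, he, by rw [Nat.zero_add]⟩)]
    · rintro (h | h | ⟨e, he, rfl⟩)
      exacts [Or.inr (Or.inl h), Or.inl h, Or.inr (Or.inr ⟨e, he, by rw [Nat.zero_add]⟩)]
  refine ⟨v, u, w1.reverse, w2, w3, ⟨inducedPathW_reverse hi1, hi2, hi3⟩,
    ⟨by rw [Walk.length_reverse, hl1]; omega, by rw [hl2]; omega, by rw [hl3]; omega⟩, ?_, ?_⟩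
  · -- intersections
    intro x hx
    rcases hx with ⟨h1, h2⟩ | ⟨h1, h2⟩ | ⟨h1, h2⟩
    · rw [hs1'] at h1; rw [hs2] at h2
      rcases h1 with h1 | h1 | ⟨e1, he1, rfl⟩
      · exact Or.inl h1
      · exact Or.inr h1
      rcases h2 with h2 | h2 | ⟨e2, he2, h2⟩
      · exact Or.inl h2
      · exact Or.inr h2
      · exfalso
        have := H.inj e1 (m₂ + e2) (by omega) (by omega) h2
        omega
    · rw [hs1'] at h1; rw [hs3] at h2
      rcases h1 with h1 | h1 | ⟨e1, he1, rfl⟩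
      · exact Or.inl h1
      · exact Or.inr h1
      rcases h2 with h2 | h2 | ⟨e2, he2, h2⟩
      · exact Or.inl h2
      · exact Or.inr h2
      · exfalso
        have := H.inj e1 (p + e2) (by omega) (by omega) h2
        omega
    · rw [hs2] at h1; rw [hs3] at h2
      rcases h1 with h1 | h1 | ⟨e1, he1, rfl⟩
      · exact Or.inl h1
      · exact Or.inr h1
      rcases h2 with h2 | h2 | ⟨e2, he2, h2⟩
      · exact Or.inl h2
      · exact Or.inr h2
      · exfalso
        have := H.inj (m₂ + e1) (p + e2) (by omega) (by omega) h2
        omega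
  · -- non-adjacency across paths
    intro x y hxv hxu hyv hyu hmem hadj
    rcases hmem with ⟨h1, h2⟩ | ⟨h1, h2⟩ | ⟨h1, h2⟩
    · rw [hs1'] at h1; rw [hs2] at h2
      rcases h1 with h1 | h1 | ⟨e1, he1, rfl⟩
      · exact hxv h1
      · exact hxu h1
      rcases h2 with h2 | h2 | ⟨e2, he2, rfl⟩
      · exact hyv h2
      · exact hyu h2
      have := H.adj_between (show e1 ≤ n - 2 by omega) (show m₂ + e2 ≤ n - 2 by omega) hadj
      omega
    · rw [hs1'] at h1; rw [hs3] at h2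
      rcases h1 with h1 | h1 | ⟨e1, he1, rfl⟩
      · exact hxv h1
      · exact hxu h1
      rcases h2 with h2 | h2 | ⟨e2, he2, rfl⟩
      · exact hyv h2
      · exact hyu h2
      have := H.adj_between (show e1 ≤ n - 2 by omega) (show p + e2 ≤ n - 2 by omega) hadj
      omega
    · rw [hs2] at h1; rw [hs3] at h2
      rcases h1 with h1 | h1 | ⟨e1, he1, rfl⟩
      · exact hxv h1
      · exact hxu h1
      rcases h2 with h2 | h2 | ⟨e2, he2, rfl⟩
      · exact hyv h2
      · exact hyu h2
      have := H.adj_between (show m₂ + e1 ≤ n - 2 by omega) (show p + e2 ≤ n - 2 by omega) hadj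
      omega

lemma caseB1 (hTri : G.CliqueFree 3) {n : ℕ} {g : ℕ → V} {u v : V} {d m₁ m₂ : ℕ}
    (H : HoleIf G n g u v) (S : SectorHyp G n g u v d m₁ m₂)
    (hB1 : G.Adj v (g (d + 1))) : ContainsTheta G := by
  have hn := H.hn
  obtain ⟨hd, h12, hm2d, hu0, hud, huint, hvm1, hvm2, hmin, hmax⟩ := S
  have hdd1 : G.Adj (g d) (g (d + 1)) := (H.adj d (d + 1) (by omega) (by omega)).mpr (Or.inl rfl)
  have hvd : ¬G.Adj v (g d) := fun h => noTri hTri h hB1 hdd1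
  have hm2d' : m₂ < d := by
    have hne : m₂ ≠ d := fun h => hvd (h ▸ hvm2)
    omega
  have hud1 : ¬G.Adj u (g (d + 1)) := fun h => noTri hTri hud h hdd1
  -- Q1
  obtain ⟨q1, hi1, hl1, hs1⟩ := H.pathV' d 1 (by omega) hB1
    (fun e he => by
      have he0 : e = 0 := by omega
      subst he0
      exact hvd)
  -- Q2
  obtain ⟨q2, hi2, hl2, hs2⟩ := H.pathV m₂ (d - m₂) d (by omega) (by omega) hvm2
    (fun e he1 he2 => hmax (m₂ + e) (by omega) (by omega))
  -- Q3
  obtain ⟨w₀, hlen0, hpath0, hsup0, hts0⟩ := H.arc 0 m₁ m₁ (by omega) (by omega)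
  have hsup0' : ∀ x, x ∈ w₀.support ↔ ∃ e, e ≤ m₁ ∧ x = g e := by
    intro x
    rw [hsup0]
    constructor
    · rintro ⟨e, he, rfl⟩; exact ⟨e, he, by rw [Nat.zero_add]⟩
    · rintro ⟨e, he, rfl⟩; exact ⟨e, he, by rw [Nat.zero_add]⟩
  have hts0' : ∀ x y, w₀.toSubgraph.Adj x y ↔ ∃ e, e < m₁ ∧
      ((x = g e ∧ y = g (e + 1)) ∨ (y = g e ∧ x = g (e + 1))) := by
    intro x y
    rw [hts0]
    constructor
    · rintro ⟨e, he, (⟨h1, h2⟩ | ⟨h1, h2⟩)⟩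
      · exact ⟨e, he, Or.inl ⟨by rw [h1, Nat.zero_add], by rw [h2, Nat.zero_add]⟩⟩
      · exact ⟨e, he, Or.inr ⟨by rw [h1, Nat.zero_add], by rw [h2, Nat.zero_add]⟩⟩
    · rintro ⟨e, he, (⟨h1, h2⟩ | ⟨h1, h2⟩)⟩
      · exact ⟨e, he, Or.inl ⟨by rw [h1, Nat.zero_add], by rw [h2, Nat.zero_add]⟩⟩
      · exact ⟨e, he, Or.inr ⟨by rw [h1, Nat.zero_add], by rw [h2, Nat.zero_add]⟩⟩
  set R : G.Walk (g d) v := Walk.cons hud.symm (Walk.cons hu0 (w₀.concat hvm1.symm)) with hR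
  have hsR : ∀ x, x ∈ R.support ↔ (x = g d ∨ x = u ∨ (∃ e, e ≤ m₁ ∧ x = g e) ∨ x = v) := by
    intro x
    rw [hR]
    simp only [Walk.support_cons, Walk.support_concat, List.concat_eq_append, List.mem_cons,
      List.mem_append, List.mem_singleton, List.not_mem_nil, or_false, hsup0']
  have hvnotin : v ∉ w₀.support := fun hmem => by
    obtain ⟨e, he, heq⟩ := (hsup0' v).mp hmem
    exact H.hv e (by omega) heq
  have hunotin : u ∉ w₀.support := fun hmem => by
    obtain ⟨e, he, heq⟩ := (hsup0' u).mp hmem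
    exact H.hu e (by omega) heq
  have hpathR : R.IsPath := by
    rw [hR, Walk.cons_isPath_iff, Walk.cons_isPath_iff]
    refine ⟨⟨?_, ?_⟩, ?_⟩
    · rw [Walk.isPath_def, Walk.support_concat, List.nodup_append]
      refine ⟨(Walk.isPath_def _).mp hpath0, List.nodup_singleton v, ?_⟩
      intro x hx b hxv hxb
      rw [List.mem_singleton] at hxv
      subst hxv
      exact hvnotin (hxb ▸ hx)
    · intro hmem
      rw [Walk.support_concat, List.mem_append, List.mem_singleton] at hmem
      rcases hmem with h | h
      · exact hunotin h
      · exact H.hne h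
    · intro hmem
      rw [Walk.support_cons, List.mem_cons] at hmem
      rcases hmem with h | hmem
      · exact H.hu d (by omega) h.symm
      rw [Walk.support_concat, List.mem_append, List.mem_singleton] at hmem
      rcases hmem with h | h
      · obtain ⟨e, he, heq⟩ := (hsup0' (g d)).mp h
        have := H.inj d e (by omega) (by omega) heq
        omega
      · exact H.hv d (by omega) h.symm
  have hTR : ∀ x y, R.toSubgraph.Adj x y ↔
      (((g d = x ∧ u = y) ∨ (g d = y ∧ u = x)) ∨
       ((u = x ∧ g 0 = y) ∨ (u = y ∧ g 0 = x)) ∨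
       w₀.toSubgraph.Adj x y ∨
       ((g m₁ = x ∧ v = y) ∨ (g m₁ = y ∧ v = x))) := by
    intro x y
    rw [hR]
    rw [show (Walk.cons hud.symm (Walk.cons hu0 (w₀.concat hvm1.symm))).toSubgraph
        = G.subgraphOfAdj hud.symm ⊔ (Walk.cons hu0 (w₀.concat hvm1.symm)).toSubgraph from rfl]
    rw [show (Walk.cons hu0 (w₀.concat hvm1.symm)).toSubgraph
        = G.subgraphOfAdj hu0 ⊔ (w₀.concat hvm1.symm).toSubgraph from rfl]
    rw [Walk.concat_eq_append, Walk.toSubgraph_append]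
    rw [show (Walk.cons hvm1.symm Walk.nil).toSubgraph
        = G.subgraphOfAdj hvm1.symm ⊔ G.singletonSubgraph v from rfl]
    simp only [Subgraph.sup_adj, subOfAdj_adj, singletonSubgraph_adj, Pi.bot_apply,
      Prop.bot_eq_false, or_false]
  have hkeyR : ∀ x y, x ∈ R.support → y ∈ R.support → G.Adj x y → R.toSubgraph.Adj x y := by
    intro x y hx hy hxy
    rw [hsR] at hx hy
    rw [hTR]
    have hm1d : m₁ + 3 ≤ d := by omega
    rcases hx with rfl | rfl | ⟨e1, he1, rfl⟩ | rfl
    · rcases hy with rfl | rfl | ⟨e2, he2, rfl⟩ | rfl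
      · exact absurd rfl hxy.ne
      · exact Or.inl (Or.inl ⟨rfl, rfl⟩)
      · have := H.adj_between (show d ≤ n - 2 by omega) (show e2 ≤ n - 2 by omega) hxy
        omega
      · exact absurd hxy.symm hvd
    · rcases hy with rfl | rfl | ⟨e2, he2, rfl⟩ | rfl
      · exact Or.inl (Or.inr ⟨rfl, rfl⟩)
      · exact absurd rfl hxy.ne
      · rcases Nat.eq_zero_or_pos e2 with rfl | hpos
        · exact Or.inr (Or.inl (Or.inl ⟨rfl, rfl⟩))
        · exact absurd hxy (huint e2 hpos (by omega))
      · exact absurd hxy H.huv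
    · rcases hy with rfl | rfl | ⟨e2, he2, rfl⟩ | rfl
      · have := H.adj_between (show e1 ≤ n - 2 by omega) (show d ≤ n - 2 by omega) hxy
        omega
      · rcases Nat.eq_zero_or_pos e1 with rfl | hpos
        · exact Or.inr (Or.inl (Or.inr ⟨rfl, rfl⟩))
        · exact absurd hxy.symm (huint e1 hpos (by omega))
      · rcases H.adj_between (show e1 ≤ n - 2 by omega) (show e2 ≤ n - 2 by omega) hxy with h | h
        · exact Or.inr (Or.inr (Or.inl ((hts0' _ _).mpr ⟨e1, by omega, Or.inl ⟨rfl, congrArg g h⟩⟩)))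
        · exact Or.inr (Or.inr (Or.inl ((hts0' _ _).mpr ⟨e2, by omega, Or.inr ⟨rfl, congrArg g h⟩⟩)))
      · rcases Nat.lt_or_ge e1 m₁ with hlt | hge
        · exact absurd hxy.symm (hmin e1 hlt)
        · have he1m : e1 = m₁ := by omega
          subst he1m
          exact Or.inr (Or.inr (Or.inr (Or.inl ⟨rfl, rfl⟩)))
    · rcases hy with rfl | rfl | ⟨e2, he2, rfl⟩ | rfl
      · exact absurd hxy hvd
      · exact absurd hxy.symm H.huv
      · rcases Nat.lt_or_ge e2 m₁ with hlt | hge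
        · exact absurd hxy (hmin e2 hlt)
        · have he2m : e2 = m₁ := by omega
          subst he2m
          exact Or.inr (Or.inr (Or.inr (Or.inr ⟨rfl, rfl⟩)))
      · exact absurd rfl hxy.ne
  set q3 : G.Walk v (g d) := R.reverse with hq3
  have hs3 : ∀ x, x ∈ q3.support ↔ (x = g d ∨ x = u ∨ (∃ e, e ≤ m₁ ∧ x = g e) ∨ x = v) := by
    intro x
    rw [hq3, Walk.support_reverse, List.mem_reverse, hsR]
  have hl3 : q3.length = m₁ + 3 := by
    rw [hq3, Walk.length_reverse, hR]
    simp only [Walk.length_cons, Walk.length_concat, hlen0]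
  refine ⟨v, g d, q1, q2, q3, ⟨hi1, hi2, inducedPathW_reverse ⟨hpathR, hkeyR⟩⟩,
    ⟨by omega, by omega, by omega⟩, ?_, ?_⟩
  · -- intersections
    intro x hx
    rcases hx with ⟨h1, h2⟩ | ⟨h1, h2⟩ | ⟨h1, h2⟩
    · rw [hs1] at h1; rw [hs2] at h2
      rcases h1 with h1 | ⟨e1, he1, rfl⟩
      · exact Or.inl h1
      rcases h2 with h2 | ⟨e2, he2, h2⟩
      · exact absurd h2.symm (H.hv (d + e1) (by omega))
      · have := H.inj (d + e1) (m₂ + e2) (by omega) (by omega) h2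
        have he10 : e1 = 0 := by omega
        subst he10
        exact Or.inr rfl
    · rw [hs1] at h1; rw [hs3] at h2
      rcases h1 with h1 | ⟨e1, he1, rfl⟩
      · exact Or.inl h1
      rcases h2 with h2 | h2 | ⟨e2, he2, h2⟩ | h2
      · exact Or.inr h2
      · exact absurd h2.symm (H.hu (d + e1) (by omega))
      · have := H.inj (d + e1) e2 (by omega) (by omega) h2
        omega
      · exact absurd h2.symm (H.hv (d + e1) (by omega))
    · rw [hs2] at h1; rw [hs3] at h2
      rcases h1 with h1 | ⟨e1, he1, rfl⟩
      · exact Or.inl h1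
      rcases h2 with h2 | h2 | ⟨e2, he2, h2⟩ | h2
      · exact Or.inr h2
      · exact absurd h2.symm (H.hu (m₂ + e1) (by omega))
      · have := H.inj (m₂ + e1) e2 (by omega) (by omega) h2
        omega
      · exact absurd h2.symm (H.hv (m₂ + e1) (by omega))
  · -- non-adjacency
    intro x y hxv hxd hyv hyd hmem hadj
    rcases hmem with ⟨h1, h2⟩ | ⟨h1, h2⟩ | ⟨h1, h2⟩
    · rw [hs1] at h1; rw [hs2] at h2
      rcases h1 with h1 | ⟨e1, he1, rfl⟩
      · exact hxv h1
      rcases h2 with h2 | ⟨e2, he2, rfl⟩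
      · exact hyv h2
      have he11 : e1 = 1 := by
        rcases Nat.eq_zero_or_pos e1 with rfl | hpos
        · exact absurd rfl hxd
        · omega
      subst he11
      have hne2 : m₂ + e2 ≠ d := fun h => hyd (congrArg g h)
      have := H.adj_between (show d + 1 ≤ n - 2 by omega) (show m₂ + e2 ≤ n - 2 by omega) hadj
      omega
    · rw [hs1] at h1; rw [hs3] at h2
      rcases h1 with h1 | ⟨e1, he1, rfl⟩
      · exact hxv h1
      have he11 : e1 = 1 := by
        rcases Nat.eq_zero_or_pos e1 with rfl | hpos
        · exact absurd rfl hxd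
        · omega
      subst he11
      rcases h2 with h2 | rfl | ⟨e2, he2, rfl⟩ | h2
      · exact hyd h2
      · exact hud1 hadj.symm
      · have := H.adj_between (show d + 1 ≤ n - 2 by omega) (show e2 ≤ n - 2 by omega) hadj
        omega
      · exact hyv h2
    · rw [hs2] at h1; rw [hs3] at h2
      rcases h1 with h1 | ⟨e1, he1, rfl⟩
      · exact hxv h1
      have hne1 : m₂ + e1 ≠ d := fun h => hxd (congrArg g h)
      rcases h2 with h2 | rfl | ⟨e2, he2, rfl⟩ | h2
      · exact hyd h2
      · exact huint (m₂ + e1) (by omega) (by omega) hadj.symm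
      · have := H.adj_between (show m₂ + e1 ≤ n - 2 by omega) (show e2 ≤ n - 2 by omega) hadj
        omega
      · exact hyv h2
def rflx (n d m : ℕ) : ℕ := if m ≤ d then d - m else d + n - m

lemma rflx_le {n d m : ℕ} (h : m ≤ d) : rflx n d m = d - m := if_pos h

lemma rflx_gt {n d m : ℕ} (h : d < m) : rflx n d m = d + n - m := if_neg (by omega)

lemma HoleIf.reflect {n : ℕ} {g : ℕ → V} {u v : V} (H : HoleIf G n g u v) {d : ℕ} (hd : d < n) :
    HoleIf G n (fun m => g (rflx n d m)) u v := by
  have hn := H.hn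
  have hb : ∀ m, m < n → rflx n d m < n := by
    intro m hm
    unfold rflx
    split <;> omega
  refine ⟨H.hn, ?_, ?_, fun m hm => H.hu _ (hb m hm), fun m hm => H.hv _ (hb m hm), H.huv, H.hne⟩
  · intro p q hp hq hpq
    have h2 := H.inj _ _ (hb p hp) (hb q hq) hpq
    revert h2
    unfold rflx
    split_ifs <;> omega
  · intro p q hp hq
    rw [H.adj _ _ (hb p hp) (hb q hq)]
    unfold rflx
    split_ifs <;> omega

lemma SectorHyp.reflect {n : ℕ} {g : ℕ → V} {u v : V} {d m₁ m₂ : ℕ}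
    (H : HoleIf G n g u v) (S : SectorHyp G n g u v d m₁ m₂) :
    SectorHyp G n (fun m => g (rflx n d m)) u v d (d - m₂) (d - m₁) := by
  have hn := H.hn
  obtain ⟨hd, h12, hm2d, hu0, hud, huint, hvm1, hvm2, hmin, hmax⟩ := S
  refine ⟨hd, by omega, by omega, ?_, ?_, ?_, ?_, ?_, ?_, ?_⟩
  · show G.Adj u (g (rflx n d 0))
    rw [rflx_le (Nat.zero_le d), Nat.sub_zero]
    exact hud
  · show G.Adj u (g (rflx n d d))
    rw [rflx_le le_rfl, Nat.sub_self]
    exact hu0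
  · intro m h1 h2
    show ¬G.Adj u (g (rflx n d m))
    rw [rflx_le (by omega)]
    exact huint (d - m) (by omega) (by omega)
  · show G.Adj v (g (rflx n d (d - m₂)))
    rw [rflx_le (by omega), show d - (d - m₂) = m₂ by omega]
    exact hvm2
  · show G.Adj v (g (rflx n d (d - m₁)))
    rw [rflx_le (by omega), show d - (d - m₁) = m₁ by omega]
    exact hvm1
  · intro m hm
    show ¬G.Adj v (g (rflx n d m))
    rw [rflx_le (by omega)]
    exact hmax (d - m) (by omega) (by omega)
  · intro m h1 h2
    show ¬G.Adj v (g (rflx n d m))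
    rw [rflx_le (by omega)]
    exact hmin (d - m) (by omega)

lemma case2core (hTri : G.CliqueFree 3) {n : ℕ} {g : ℕ → V} {u v : V} {d m₁ m₂ : ℕ}
    (H : HoleIf G n g u v) (S : SectorHyp G n g u v d m₁ m₂)
    (hB1 : ¬G.Adj v (g (d + 1)))
    (hnc : ∀ s, d < s → s < n → G.Adj v (g s) → G.Adj u (g s) → False)
    {t s₀ : ℕ} (hdt : d < t) (htn : t < n) (hut : G.Adj u (g t))
    (hds : d < s₀) (hst : s₀ < t) (hvs : G.Adj v (g s₀)) : ContainsTheta G := by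
  classical
  have hn := H.hn
  have hd := S.hd
  have hs₀le : s₀ ≤ t - 1 := by omega
  set P : ℕ → Prop := fun m => d < m ∧ G.Adj v (g m) with hP
  have hs₀P : P s₀ := ⟨hds, hvs⟩
  set s := Nat.findGreatest P (t - 1) with hs
  have hsP : P s := Nat.findGreatest_spec hs₀le hs₀P
  have hst1 : s ≤ t - 1 := Nat.findGreatest_le _
  have hsmax : ∀ k, s < k → k ≤ t - 1 → ¬P k := fun k h1 h2 =>
    Nat.findGreatest_is_greatest h1 h2
  have hQ : ∃ k, s < k ∧ k < n ∧ G.Adj u (g k) := ⟨t, by omega, htn, hut⟩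
  set t' := Nat.find hQ with ht'
  obtain ⟨hst'', ht'n, hut'⟩ := Nat.find_spec hQ
  have ht'min : ∀ k, k < t' → ¬(s < k ∧ k < n ∧ G.Adj u (g k)) := fun k hk => Nat.find_min hQ hk
  have ht't : t' ≤ t := Nat.find_min' hQ ⟨by omega, htn, hut⟩
  have hsd1 : s ≠ d + 1 := fun h => hB1 (h ▸ hsP.2)
  have ht'n1 : t' ≠ n - 1 := by
    intro h
    have hadj : G.Adj (g (n - 1)) (g 0) :=
      (H.adj (n - 1) 0 (by omega) (by omega)).mpr (by right; right; right; exact ⟨rfl, rfl⟩)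
    exact noTri hTri (h ▸ hut') S.hu0 hadj
  refine master H S (p := s) (L := t' - s) (by omega) (by omega) hsP.2 ?_ ?_ ?_
  · rw [show s + (t' - s) = t' by omega]
    exact hut'
  · intro e he1 he2 hadj
    rcases le_or_gt (s + e) (t - 1) with h | h
    · exact hsmax (s + e) (by omega) h ⟨by omega, hadj⟩
    · have hse : s + e = t := by omega
      exact hnc t hdt htn (hse ▸ hadj) hut
  · intro e he hadj
    rcases Nat.eq_zero_or_pos e with rfl | hpos
    · exact hnc s (by omega) (by omega) hsP.2 (by simpa using hadj)
    · exact ht'min (s + e) (by omega) ⟨by omega, by omega, hadj⟩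

lemma case2 (hTri : G.CliqueFree 3) {n : ℕ} {g : ℕ → V} {u v : V} {d m₁ m₂ : ℕ}
    (H : HoleIf G n g u v) (S : SectorHyp G n g u v d m₁ m₂)
    (hthird : ∃ t, d < t ∧ t < n ∧ G.Adj u (g t))
    (hvout : ∃ s, d < s ∧ s < n ∧ G.Adj v (g s)) : ContainsTheta G := by
  have hn := H.hn
  have hd := S.hd
  by_cases hB1 : G.Adj v (g (d + 1))
  · exact caseB1 hTri H S hB1
  by_cases hB2 : G.Adj v (g (n - 1))
  · refine caseB1 hTri (H.reflect (by omega)) (S.reflect H) ?_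
    show G.Adj v (g (rflx n d (d + 1)))
    rw [rflx_gt (by omega), show d + n - (d + 1) = n - 1 by omega]
    exact hB2
  by_cases hnc : ∃ s, d < s ∧ s < n ∧ G.Adj v (g s) ∧ G.Adj u (g s)
  · obtain ⟨s, h1, h2, h3, h4⟩ := hnc
    have hs1 : s ≠ d + 1 := fun h => hB1 (h ▸ h3)
    have hs2 : s ≠ n - 1 := fun h => hB2 (h ▸ h3)
    exact master H S (p := s) (L := 0) (by omega) (by omega) h3 (by simpa using h4)
      (fun e he1 he2 => by omega) (fun e he => by omega)
  push_neg at hnc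
  have hnc' : ∀ s, d < s → s < n → G.Adj v (g s) → G.Adj u (g s) → False := by
    intro s h1 h2 h3 h4
    exact (hnc s h1 h2 h3) h4
  obtain ⟨t, hdt, htn, hut⟩ := hthird
  by_cases hvt : ∃ s, d < s ∧ s < t ∧ G.Adj v (g s)
  · obtain ⟨s₀, h1, h2, h3⟩ := hvt
    exact case2core hTri H S hB1 hnc' hdt htn hut h1 h2 h3
  · push_neg at hvt
    obtain ⟨s₀, h1, h2, h3⟩ := hvout
    have hts₀ : t < s₀ := by
      rcases Nat.lt_trichotomy s₀ t with h | h | h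
      · exact absurd h3 (hvt s₀ h1 h)
      · exact absurd hut (fun h4 => hnc' s₀ h1 h2 h3 (h ▸ h4))
      · exact h
    refine case2core hTri (H.reflect (by omega)) (S.reflect H) ?_ ?_
      (t := d + n - t) (s₀ := d + n - s₀) (by omega) (by omega) ?_ (by omega) (by omega) ?_
    · show ¬G.Adj v (g (rflx n d (d + 1)))
      rw [rflx_gt (by omega), show d + n - (d + 1) = n - 1 by omega]
      exact hB2
    · intro s' hs1 hs2 hs3 hs4
      rw [rflx_gt (by omega)] at hs3 hs4
      exact hnc' (d + n - s') (by omega) (by omega) hs3 hs4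
    · show G.Adj u (g (rflx n d (d + n - t)))
      rw [rflx_gt (by omega), show d + n - (d + n - t) = t by omega]
      exact hut
    · show G.Adj v (g (rflx n d (d + n - s₀)))
      rw [rflx_gt (by omega), show d + n - (d + n - s₀) = s₀ by omega]
      exact h3
lemma castEq {n : ℕ} (hn : 0 < n) {x y : ℕ} (hx : x < n) (hy : y < n) :
    ((x : ZMod n) = (y : ZMod n)) ↔ x = y := by
  haveI : NeZero n := ⟨by omega⟩
  constructor
  · intro h
    have h2 := congrArg ZMod.val h
    rwa [ZMod.val_cast_of_lt hx, ZMod.val_cast_of_lt hy] at h2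
  · intro h; rw [h]

lemma succIff {n : ℕ} (hn : 4 ≤ n) {p q : ℕ} (hp : p < n) (hq : q < n) :
    ((q : ZMod n) = (p : ZMod n) + 1) ↔ (q = p + 1 ∨ (q = 0 ∧ p = n - 1)) := by
  haveI : NeZero n := ⟨by omega⟩
  have hcast : ((p : ZMod n) + 1) = ((p + 1 : ℕ) : ZMod n) := by push_cast; ring
  rcases lt_or_ge (p + 1) n with h | h
  · rw [hcast, castEq (by omega) hq h]
    omega
  · have hpn : p + 1 = n := by omega
    rw [hcast, hpn, ZMod.natCast_self, ← Nat.cast_zero, castEq (by omega) hq (by omega)]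
    omega

lemma nested_symm {n : ℕ} {f : ZMod n → V} {u v : V} (hn : 4 ≤ n)
    (h : NestedCfg G n f v u) : NestedCfg G n f u v := by
  obtain ⟨i, d, hd1, hdn, hv', hu'⟩ := h
  haveI : NeZero n := ⟨by omega⟩
  have hzero : ((d : ZMod n)) + ((n - d : ℕ) : ZMod n) = 0 := by
    rw [← Nat.cast_add, show d + (n - d) = n by omega, ZMod.natCast_self]
  refine ⟨i + (d : ZMod n), n - d, by omega, by omega, ?_, ?_⟩
  · intro m hm
    obtain ⟨e, he, hme⟩ := hu' m hm
    exact ⟨e, he, hme⟩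
  · intro m hm
    obtain ⟨e, he, hme⟩ := hv' m hm
    refine ⟨e, by omega, ?_⟩
    rw [hme, add_assoc i (d : ZMod n) ((n - d : ℕ) : ZMod n), hzero, add_zero]

set_option maxHeartbeats 1000000 in
lemma sector_core (hTheta : ¬ContainsTheta G) (hTri : G.CliqueFree 3)
    {n : ℕ} {f : ZMod n → V} {u v : V} (hW : Is2WheelCfg G n f u v) (huv : ¬G.Adj u v)
    {i : ZMod n} {d : ℕ} (hS : IsSector G n f u i d)
    {m₁ m₂ : ℕ} (hm1d : m₁ ≤ d) (hm2d : m₂ ≤ d)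
    (ha1 : G.Adj v (f (i + (m₁ : ZMod n)))) (ha2 : G.Adj v (f (i + (m₂ : ZMod n))))
    (hne : i + (m₁ : ZMod n) ≠ i + (m₂ : ZMod n)) : NestedCfg G n f u v := by
  classical
  obtain ⟨hf, huvne, hur, hvr, hucard, hvcard⟩ := hW
  obtain ⟨hn4, hfinj, hfadj⟩ := hf
  obtain ⟨hd1, hdn, hui, huid, husec⟩ := hS
  haveI : NeZero n := ⟨by omega⟩
  set g : ℕ → V := fun m => f (i + (m : ZMod n)) with hg
  have hginj : ∀ p q, p < n → q < n → g p = g q → p = q := by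
    intro p q hp hq hpq
    have h1 : i + (p : ZMod n) = i + (q : ZMod n) := hfinj hpq
    exact (castEq (by omega) hp hq).mp (add_left_cancel h1)
  have hgadj : ∀ p q, p < n → q < n →
      (G.Adj (g p) (g q) ↔
        (q = p + 1 ∨ p = q + 1 ∨ (p = 0 ∧ q = n - 1) ∨ (q = 0 ∧ p = n - 1))) := by
    intro p q hp hq
    have hbase := hfadj (i + (p : ZMod n)) (i + (q : ZMod n))
    have e1 : (i + (q : ZMod n) = i + (p : ZMod n) + 1) ↔ ((q : ZMod n) = (p : ZMod n) + 1) := by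
      rw [add_assoc]
      exact ⟨fun h => add_left_cancel h, fun h => by rw [h]⟩
    have e2 : (i + (p : ZMod n) = i + (q : ZMod n) + 1) ↔ ((p : ZMod n) = (q : ZMod n) + 1) := by
      rw [add_assoc]
      exact ⟨fun h => add_left_cancel h, fun h => by rw [h]⟩
    rw [show G.Adj (g p) (g q) ↔ G.Adj (f (i + (p : ZMod n))) (f (i + (q : ZMod n))) from Iff.rfl]
    rw [hbase, e1, e2, succIff hn4 hp hq, succIff hn4 hq hp]
    tauto
  have H : HoleIf G n g u v :=
    ⟨hn4, hginj, hgadj, fun m hm h => hur ⟨i + (m : ZMod n), h.symm⟩,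
      fun m hm h => hvr ⟨i + (m : ZMod n), h.symm⟩, huv, huvne⟩
  have hdecomp : ∀ m : ZMod n, ∃ m' : ℕ, m' < n ∧ m = i + (m' : ZMod n) := by
    intro m
    refine ⟨(m - i).val, ZMod.val_lt _, ?_⟩
    have h2 : (((m - i).val : ℕ) : ZMod n) = m - i := ZMod.natCast_rightInverse (m - i)
    rw [h2]
    ring
  have hu0 : G.Adj u (g 0) := by
    show G.Adj u (f (i + ((0 : ℕ) : ZMod n)))
    simpa using hui
  have hud : G.Adj u (g d) := huid
  have husec' : ∀ m, 0 < m → m < d → ¬G.Adj u (g m) := fun m h1 h2 => husec m h1 h2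
  -- extremal v-neighbors in the sector
  have hex : ∃ m, m ≤ d ∧ G.Adj v (g m) := ⟨m₁, hm1d, ha1⟩
  set M₁ := Nat.find hex with hM₁
  obtain ⟨hM1d, hM1adj⟩ := Nat.find_spec hex
  have hM1min : ∀ m, m < M₁ → ¬G.Adj v (g m) := by
    intro m hm hadj
    rcases le_or_gt m d with h | h
    · exact Nat.find_min hex hm ⟨h, hadj⟩
    · omega
  set M₂ := Nat.findGreatest (fun m => G.Adj v (g m)) d with hM₂
  have hM2adj : G.Adj v (g M₂) := Nat.findGreatest_spec (P := fun m => G.Adj v (g m)) hm1d ha1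
  have hM2d : M₂ ≤ d := Nat.findGreatest_le (P := fun m => G.Adj v (g m)) d
  have hM2max : ∀ m, M₂ < m → m ≤ d → ¬G.Adj v (g m) := fun m h1 h2 =>
    Nat.findGreatest_is_greatest (P := fun m => G.Adj v (g m)) h1 h2
  have hm1ne : m₁ ≠ m₂ := by
    intro h
    exact hne (by rw [h])
  have hM1le1 : M₁ ≤ m₁ := Nat.find_min' hex ⟨hm1d, ha1⟩
  have hM1le2 : M₁ ≤ m₂ := Nat.find_min' hex ⟨hm2d, ha2⟩
  have hM2ge1 : m₁ ≤ M₂ := Nat.le_findGreatest (P := fun m => G.Adj v (g m)) hm1d ha1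
  have hM2ge2 : m₂ ≤ M₂ := Nat.le_findGreatest (P := fun m => G.Adj v (g m)) hm2d ha2
  have hM1M2 : M₁ < M₂ := by omega
  have h12 : M₁ + 2 ≤ M₂ := by
    rcases Nat.lt_or_ge (M₁ + 1) M₂ with h | h
    · omega
    · exfalso
      have hM2eq : M₂ = M₁ + 1 := by omega
      have hedge : G.Adj (g M₁) (g M₂) :=
        (hgadj M₁ M₂ (by omega) (by omega)).mpr (Or.inl (by omega))
      exact noTri hTri hM1adj hM2adj hedge
  -- u has a neighbor strictly inside the complementary arc
  have hpair : ({i, i + (d : ZMod n)} : Set (ZMod n)).ncard ≤ 2 := by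
    apply le_trans (Set.ncard_insert_le _ _)
    simp [Set.ncard_singleton]
  have hthird : ∃ t, d < t ∧ t < n ∧ G.Adj u (g t) := by
    by_contra hcon
    push_neg at hcon
    have hsub : {m : ZMod n | G.Adj u (f m)} ⊆ {i, i + (d : ZMod n)} := by
      intro m hm
      obtain ⟨m', hm'n, rfl⟩ := hdecomp m
      have hadjm : G.Adj u (g m') := hm
      rcases Nat.lt_or_ge m' d with h | h
      · rcases Nat.eq_zero_or_pos m' with rfl | hpos
        · left
          show i + ((0 : ℕ) : ZMod n) = i
          simp
        · exact absurd hadjm (husec m' hpos h)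
      · rcases Nat.eq_or_lt_of_le h with h' | h'
        · right
          show i + ((m' : ℕ) : ZMod n) = i + (d : ZMod n)
          rw [← h']
        · exact absurd hadjm (hcon m' h' hm'n)
    have := Set.ncard_le_ncard hsub (Set.toFinite _)
    omega
  have hd3 : d + 3 ≤ n := by
    by_contra hcon
    rcases Nat.lt_or_ge d (n - 1) with h | h
    · -- d = n - 2
      obtain ⟨t, ht1, ht2, ht3⟩ := hthird
      have ht : t = n - 1 := by omega
      subst ht
      have hdt : d = n - 2 := by omega
      have hedge : G.Adj (g d) (g (n - 1)) :=
        (hgadj d (n - 1) (by omega) (by omega)).mpr (Or.inl (by omega))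
      exact noTri hTri hud ht3 hedge
    · -- d = n - 1
      have hdt : d = n - 1 := by omega
      have hedge : G.Adj (g 0) (g d) :=
        (hgadj 0 d (by omega) (by omega)).mpr (by right; right; left; exact ⟨rfl, by omega⟩)
      exact noTri hTri hu0 hud hedge
  have S : SectorHyp G n g u v d M₁ M₂ :=
    ⟨hd3, h12, hM2d, hu0, hud, husec', hM1adj, hM2adj, hM1min, hM2max⟩
  -- case split on v-neighbors in the complementary arc
  by_cases hvout : ∃ s, d < s ∧ s < n ∧ G.Adj v (g s)
  · exact absurd (case2 hTri H S hthird hvout) hTheta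
  · push_neg at hvout
    have hzero : ((d : ZMod n)) + ((n - d : ℕ) : ZMod n) = 0 := by
      rw [← Nat.cast_add, show d + (n - d) = n by omega, ZMod.natCast_self]
    refine ⟨i + (d : ZMod n), n - d, by omega, by omega, ?_, ?_⟩
    · intro m hm
      obtain ⟨m', hm'n, rfl⟩ := hdecomp m
      have hadjm : G.Adj u (g m') := hm
      rcases Nat.lt_or_ge m' d with h | h
      · rcases Nat.eq_zero_or_pos m' with rfl | hpos
        · refine ⟨n - d, le_rfl, ?_⟩
          rw [add_assoc i (d : ZMod n) ((n - d : ℕ) : ZMod n), hzero, add_zero]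
          simp
        · exact absurd hadjm (husec m' hpos h)
      · refine ⟨m' - d, by omega, ?_⟩
        rw [add_assoc i (d : ZMod n) ((m' - d : ℕ) : ZMod n), ← Nat.cast_add,
          show d + (m' - d) = m' by omega]
    · intro m hm
      obtain ⟨m', hm'n, rfl⟩ := hdecomp m
      have hadjm : G.Adj v (g m') := hm
      have hm'd : m' ≤ d := by
        by_contra hcon
        exact hvout m' (by omega) hm'n hadjm
      refine ⟨m', by omega, ?_⟩
      rw [add_assoc i (d : ZMod n) ((n - d : ℕ) : ZMod n), hzero, add_zero]

end S4

/-- In a (theta, triangle)-free graph, if a 2-wheel with non-adjacent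
centers is not nested, then every `u`-sector contains at most one neighbor of `v` and
every `v`-sector contains at most one neighbor of `u`. -/
theorem statement4 (G : SimpleGraph V) (hTheta : ¬ContainsTheta G) (hTri : G.CliqueFree 3)
    (n : ℕ) (f : ZMod n → V) (u v : V)
    (hW : Is2WheelCfg G n f u v) (huv : ¬G.Adj u v)
    (hnot : ¬NestedCfg G n f u v) :
    (∀ (i : ZMod n) (d : ℕ), IsSector G n f u i d →
      ∀ m₁ m₂ : ℕ, m₁ ≤ d → m₂ ≤ d →
        G.Adj v (f (i + (m₁ : ZMod n))) → G.Adj v (f (i + (m₂ : ZMod n))) →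
        i + (m₁ : ZMod n) = i + (m₂ : ZMod n)) ∧
    (∀ (i : ZMod n) (d : ℕ), IsSector G n f v i d →
      ∀ m₁ m₂ : ℕ, m₁ ≤ d → m₂ ≤ d →
        G.Adj u (f (i + (m₁ : ZMod n))) → G.Adj u (f (i + (m₂ : ZMod n))) →
        i + (m₁ : ZMod n) = i + (m₂ : ZMod n)) := by
  constructor
  · intro i d hSec m₁ m₂ h1 h2 ha1 ha2
    by_contra hne
    exact hnot (S4.sector_core hTheta hTri hW huv hSec h1 h2 ha1 ha2 hne)
  · intro i d hSec m₁ m₂ h1 h2 ha1 ha2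
    by_contra hne
    have hn4 : 4 ≤ n := hW.1.1
    have hW' : Is2WheelCfg G n f v u :=
      ⟨hW.1, (hW.2.1).symm, hW.2.2.2.1, hW.2.2.1, hW.2.2.2.2.2, hW.2.2.2.2.1⟩
    have hvu : ¬G.Adj v u := fun h => huv h.symm
    exact hnot (S4.nested_symm hn4 (S4.sector_core hTheta hTri hW' hvu hSec h1 h2 ha1 ha2 hne))
end

section
/- Let G be a (theta, triangle)-free graph and let W = (H, {u, v}) be a 2-wheel in G with uv ∉ E(G) that is not a nested wheel. Then u and v have no common neighbors in H. -/
open SimpleGraph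

variable {V : Type} [Fintype V] [DecidableEq V]

namespace ThetaAux
variable {G : SimpleGraph V} {n : ℕ} {f : ZMod n → V}

lemma castinj (hn : 0 < n) {r s : ℕ} (hr : r < n) (hs : s < n) (h : (r : ZMod n) = s) : r = s := by
  haveI : NeZero n := ⟨hn.ne'⟩
  rw [← ZMod.val_cast_of_lt hr, ← ZMod.val_cast_of_lt hs, h]

lemma holeAdj (hemb : IsHoleEmb G n f) (r : ZMod n) : G.Adj (f r) (f (r + 1)) :=
  (hemb.2.2 r (r+1)).mpr (Or.inl rfl)

lemma holeNotAdj (hemb : IsHoleEmb G n f) {r s : ℕ} (h2 : r + 2 ≤ s) (hs : s ≤ n - 2) :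
    ¬G.Adj (f r) (f s) := by
  have hn : 4 ≤ n := hemb.1
  intro h
  rcases (hemb.2.2 _ _).mp h with h' | h'
  · have : ((s : ℕ) : ZMod n) = ((r + 1 : ℕ) : ZMod n) := by push_cast; exact h'
    have := castinj (by omega) (by omega) (by omega) this
    omega
  · have : ((r : ℕ) : ZMod n) = ((s + 1 : ℕ) : ZMod n) := by push_cast; exact h'
    have := castinj (by omega) (by omega) (by omega) this
    omega

lemma mapShift (f : ZMod n → V) (r : ZMod n) (k : ℕ) :
    (List.range (k+1)).map (fun i : ℕ => f (r + (i:ℕ))) =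
      f r :: (List.range k).map (fun i : ℕ => f ((r+1) + (i:ℕ))) := by
  rw [List.range_succ_eq_map, List.map_cons, List.map_map]
  congr 1
  · simp
  · congr 1
    funext i
    simp only [Function.comp_apply]
    congr 1
    push_cast
    ring

lemma exists_holeWalk (hemb : IsHoleEmb G n f) :
    ∀ (k : ℕ) (r s : ZMod n), s = r + (k : ℕ) →
    ∃ w : G.Walk (f r) (f s), w.length = k ∧
      w.support = (List.range (k+1)).map (fun i => f (r + (i : ℕ))) ∧
      (∀ i : ℕ, i < k → w.toSubgraph.Adj (f (r + (i:ℕ))) (f (r + (i:ℕ) + 1))) ∧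
      (∀ x y, w.toSubgraph.Adj x y → ∃ i : ℕ, i < k ∧
        ((x = f (r + (i:ℕ)) ∧ y = f (r + (i:ℕ) + 1)) ∨ (y = f (r + (i:ℕ)) ∧ x = f (r + (i:ℕ) + 1)))) := by
  intro k
  induction k with
  | zero =>
    intro r s hs
    have hsr : s = r := by simpa using hs
    subst hsr
    refine ⟨Walk.nil, rfl, by simp [List.range_succ], by omega, ?_⟩
    intro x y h
    simp only [Walk.toSubgraph] at h
    rw [singletonSubgraph_adj] at h
    exact absurd h (by simp)
  | succ k ih =>
    intro r s hs
    obtain ⟨w, hlen, hsup, hadj1, hadj2⟩ := ih (r+1) s (by rw [hs]; push_cast; ring)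
    refine ⟨Walk.cons (holeAdj hemb r) w, by simp [hlen], ?_, ?_, ?_⟩
    · rw [Walk.support_cons, hsup]
      conv_rhs => rw [mapShift f r (k+1)]
    · intro i hi
      rcases Nat.eq_zero_or_pos i with rfl | hpos
      · simp only [Walk.toSubgraph]
        exact Subgraph.sup_adj.mpr (Or.inl (by simp [subgraphOfAdj_adj]))
      · obtain ⟨j, rfl⟩ := Nat.exists_eq_add_of_lt hpos
        simp only [zero_add] at *
        have := hadj1 j (by omega)
        simp only [Walk.toSubgraph]
        refine Subgraph.sup_adj.mpr (Or.inr ?_)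
        convert this using 2 <;> push_cast <;> ring
    · intro x y h
      simp only [Walk.toSubgraph] at h
      rcases Subgraph.sup_adj.mp h with h | h
      · rw [subgraphOfAdj_adj] at h
        refine ⟨0, by omega, ?_⟩
        rcases Sym2.eq_iff.mp h.symm with ⟨h1, h2⟩ | ⟨h1, h2⟩
        · exact Or.inl ⟨by simpa using h1, by simpa using h2⟩
        · exact Or.inr ⟨by simpa using h2, by simpa using h1⟩
      · obtain ⟨i, hi, hc⟩ := hadj2 x y h
        refine ⟨i + 1, by omega, ?_⟩
        have e1 : r + ((i:ℕ)+1 : ℕ) = r + 1 + (i:ℕ) := by push_cast; ring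
        have e2 : r + ((i:ℕ)+1 : ℕ) + 1 = r + 1 + (i:ℕ) + 1 := by push_cast; ring
        rw [e2, e1]; exact hc


lemma fadd (f : ZMod n → V) (x i : ℕ) : f ((x:ZMod n) + (i:ℕ)) = f ((x + i : ℕ)) := by
  congr 1; push_cast; ring

lemma fadd1 (f : ZMod n → V) (x i : ℕ) : f ((x:ZMod n) + (i:ℕ) + 1) = f ((x + i + 1 : ℕ)) := by
  congr 1; push_cast; ring

lemma holeNodup (hemb : IsHoleEmb G n f) {k : ℕ} (hk : k < n) (r : ℕ) (hr : r < n)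
    (hrk : r + k < n) :
    ((List.range (k+1)).map (fun i : ℕ => f ((r : ZMod n) + (i:ℕ)))).Nodup := by
  refine List.Nodup.map_on ?_ List.nodup_range
  intro i hi j hj hij
  simp only [List.mem_range] at hi hj
  have := hemb.2.1 hij
  have h2 : ((r + i : ℕ) : ZMod n) = ((r + j : ℕ) : ZMod n) := by
    push_cast
    exact this
  have := castinj (by omega) (by omega) (by omega) h2
  omega

lemma mkS0 (hemb : IsHoleEmb G n f) {p q : V} (x : ZMod n) (hpq : p ≠ q) (hnadj : ¬G.Adj p q)
    (hpx : G.Adj p (f x)) (hqx : G.Adj q (f x)) (hp : p ∉ Set.range f) (hq : q ∉ Set.range f) :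
    ∃ w : G.Walk p q, w.length = 2 ∧ (∀ r, r ∈ w.support ↔ r = p ∨ r = q ∨ r = f x) ∧
      IsInducedPathW G w := by
  refine ⟨Walk.cons hpx (Walk.cons hqx.symm Walk.nil), rfl, ?_, ?_, ?_⟩
  · intro r; simp [or_comm, or_left_comm]
  · rw [Walk.isPath_def]
    simp only [Walk.support_cons, Walk.support_nil, List.nodup_cons, List.mem_cons,
      List.mem_singleton, List.not_mem_nil]
    refine ⟨?_, ?_, by simp⟩
    · push_neg
      exact ⟨fun h => hp ⟨x, h.symm⟩, hpq, by simp⟩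
    · push_neg
      exact ⟨fun h => hq ⟨x, h⟩, by simp⟩
  · intro a b ha hb hab
    simp only [Walk.support_cons, Walk.support_nil, List.mem_cons, List.mem_singleton,
      List.not_mem_nil, or_false] at ha hb
    rcases ha with rfl | rfl | rfl <;> rcases hb with rfl | rfl | rfl
    · exact absurd hab (G.irrefl)
    · simp [Walk.toSubgraph, Subgraph.sup_adj, subgraphOfAdj_adj]
    · exact absurd hab hnadj
    · simp [Walk.toSubgraph, Subgraph.sup_adj, subgraphOfAdj_adj]
    · exact absurd hab (G.irrefl)
    · simp [Walk.toSubgraph, Subgraph.sup_adj, subgraphOfAdj_adj]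
    · exact absurd hab (fun h => hnadj h.symm)
    · simp [Walk.toSubgraph, Subgraph.sup_adj, subgraphOfAdj_adj]
    · exact absurd hab (G.irrefl)

lemma mkS1 (hemb : IsHoleEmb G n f) {p q : V} (x y : ℕ) (h2x : 2 ≤ x) (hxy : x < y)
    (hyn : y ≤ n - 2)
    (hpx : G.Adj p (f x)) (hqy : G.Adj q (f y))
    (hponly : ∀ z : ℕ, x < z → z ≤ y → ¬G.Adj p (f z))
    (hqonly : ∀ z : ℕ, x ≤ z → z < y → ¬G.Adj q (f z))
    (hp : p ∉ Set.range f) (hq : q ∉ Set.range f) (hpq : p ≠ q) (hnadj : ¬G.Adj p q) :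
    ∃ w : G.Walk p q, 2 ≤ w.length ∧
      (∀ r, r ∈ w.support ↔ r = p ∨ r = q ∨ ∃ z : ℕ, x ≤ z ∧ z ≤ y ∧ r = f z) ∧
      IsInducedPathW G w := by
  have h4 := hemb.1
  have hyx : (y : ZMod n) = (x : ZMod n) + ((y - x : ℕ) : ZMod n) := by
    have : ((x + (y - x) : ℕ) : ZMod n) = (y : ZMod n) := by congr 1; omega
    rw [← this]; push_cast; ring
  obtain ⟨w0, hlen0, hsup0, hadj0, hadj0'⟩ := exists_holeWalk hemb (y - x) (x : ℕ) (y : ℕ) hyx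
  have hmem0 : ∀ r, r ∈ w0.support ↔ ∃ i : ℕ, i ≤ y - x ∧ r = f ((x + i : ℕ)) := by
    intro r
    rw [hsup0]
    simp only [List.mem_map, List.mem_range]
    constructor
    · rintro ⟨i, hi, rfl⟩; exact ⟨i, by omega, (fadd f x i)⟩
    · rintro ⟨i, hi, rfl⟩; exact ⟨i, by omega, (fadd f x i)⟩
  refine ⟨Walk.cons hpx (w0.append (Walk.cons hqy.symm Walk.nil)), ?_, ?_, ?_, ?_⟩
  · simp [Walk.length_append, hlen0]
  · intro r
    simp only [Walk.support_cons, List.mem_cons, Walk.support_append, List.mem_append,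
      Walk.support_cons, Walk.support_nil, List.tail_cons, List.mem_singleton,
      List.not_mem_nil, or_false] at *
    rw [hmem0 r]
    constructor
    · rintro (rfl | ⟨i, hi, rfl⟩ | rfl)
      · exact Or.inl rfl
      · exact Or.inr (Or.inr ⟨x + i, by omega, by omega, rfl⟩)
      · exact Or.inr (Or.inl rfl)
    · rintro (rfl | rfl | ⟨z, hz1, hz2, rfl⟩)
      · exact Or.inl rfl
      · exact Or.inr (Or.inr rfl)
      · exact Or.inr (Or.inl ⟨z - x, by omega, by congr 1; congr 1; omega⟩)
  · rw [Walk.isPath_def]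
    simp only [Walk.support_cons, Walk.support_append, Walk.support_nil, List.tail_cons]
    rw [List.nodup_cons]
    constructor
    · simp only [List.mem_append, List.mem_singleton]
      rintro (hmem | rfl)
      · rcases (hmem0 p).mp hmem with ⟨i, _, hpi⟩
        exact hp ⟨_, hpi.symm⟩
      · exact hpq rfl
    · rw [List.nodup_append]
      refine ⟨?_, List.nodup_singleton q, ?_⟩
      · rw [hsup0]
        exact holeNodup hemb (by omega) x (by omega) (by omega)
      · intro a hmem
        simp only [List.mem_singleton]
        rcases (hmem0 a).mp hmem with ⟨i, _, rfl⟩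
        intro b hb hqa
        subst hb
        exact hq ⟨_, hqa⟩
  · intro a b ha hb hab
    simp only [Walk.support_cons, List.mem_cons, Walk.support_append, List.mem_append,
      Walk.support_cons, Walk.support_nil, List.tail_cons, List.mem_singleton,
      List.not_mem_nil, or_false] at ha hb
    have hTS : ∀ c d : V, w0.toSubgraph.Adj c d →
        (Walk.cons hpx (w0.append (Walk.cons hqy.symm Walk.nil))).toSubgraph.Adj c d := by
      intro c d h
      simp only [Walk.toSubgraph, Walk.toSubgraph_append]
      exact Subgraph.sup_adj.mpr (Or.inr (Subgraph.sup_adj.mpr (Or.inl h)))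
    have hedge1 : (Walk.cons hpx (w0.append (Walk.cons hqy.symm Walk.nil))).toSubgraph.Adj p (f x) := by
      simp only [Walk.toSubgraph, Walk.toSubgraph_append]
      exact Subgraph.sup_adj.mpr (Or.inl (by simp [subgraphOfAdj_adj]))
    have hedge2 : (Walk.cons hpx (w0.append (Walk.cons hqy.symm Walk.nil))).toSubgraph.Adj (f y) q := by
      simp only [Walk.toSubgraph, Walk.toSubgraph_append]
      refine Subgraph.sup_adj.mpr (Or.inr (Subgraph.sup_adj.mpr (Or.inr ?_)))
      exact Subgraph.sup_adj.mpr (Or.inl (by simp [subgraphOfAdj_adj]))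
    have hhole : ∀ i j : ℕ, i ≤ y - x → j ≤ y - x → G.Adj (f ((x+i:ℕ))) (f ((x+j:ℕ))) →
        (Walk.cons hpx (w0.append (Walk.cons hqy.symm Walk.nil))).toSubgraph.Adj
          (f ((x+i:ℕ))) (f ((x+j:ℕ))) := by
      intro i j hi hj hadj
      rcases (hemb.2.2 _ _).mp hadj with h' | h'
      · have : ((x + j : ℕ) : ZMod n) = ((x + i + 1 : ℕ) : ZMod n) := by push_cast at h' ⊢; linear_combination h'
        have hji : x + j = x + i + 1 := castinj (by omega) (by omega) (by omega) this
        have hik : i < y - x := by omega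
        have h5 := hadj0 i hik
        rw [fadd f x i, fadd1 f x i] at h5
        rw [show x + j = x + i + 1 from hji]
        exact hTS _ _ h5
      · have : ((x + i : ℕ) : ZMod n) = ((x + j + 1 : ℕ) : ZMod n) := by push_cast at h' ⊢; linear_combination h'
        have hij' : x + i = x + j + 1 := castinj (by omega) (by omega) (by omega) this
        have hjk : j < y - x := by omega
        have h5 := hadj0 j hjk
        rw [fadd f x j, fadd1 f x j] at h5
        rw [show x + i = x + j + 1 from hij']
        exact (hTS _ _ h5).symm
    have hcast : ∀ i : ℕ, i ≤ y - x → f ((x + i:ℕ)) = f y → x + i = y := by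
      intro i hi h
      have := hemb.2.1 h
      exact castinj (by omega) (by omega) (by omega) this
    rcases ha with rfl | ha | rfl
    · rcases hb with rfl | hb | rfl
      · exact absurd hab (G.irrefl)
      · rcases (hmem0 b).mp hb with ⟨i, hi, rfl⟩
        rcases Nat.eq_zero_or_pos i with rfl | hpos
        · simpa using hedge1
        · exact absurd hab (by simpa using hponly (x + i) (by omega) (by omega))
      · exact absurd hab hnadj
    · rcases (hmem0 a).mp ha with ⟨i, hi, rfl⟩
      rcases hb with rfl | hb | rfl
      · rcases Nat.eq_zero_or_pos i with rfl | hpos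
        · simpa using hedge1.symm
        · exact absurd hab.symm (by simpa using hponly (x + i) (by omega) (by omega))
      · rcases (hmem0 b).mp hb with ⟨j, hj, rfl⟩
        exact hhole i j hi hj hab
      · rcases Nat.eq_or_lt_of_le hi with heq | hik
        · have hxy2 : x + i = y := by omega
          rw [hxy2] at hab ⊢
          exact hedge2
        · exact absurd hab.symm (hqonly (x + i) (by omega) (by omega))
    · rcases hb with rfl | hb | rfl
      · exact absurd hab (fun h => hnadj h.symm)
      · rcases (hmem0 b).mp hb with ⟨i, hi, rfl⟩
        rcases Nat.eq_or_lt_of_le hi with heq | hik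
        · have hxy2 : x + i = y := by omega
          rw [hxy2] at hab ⊢
          exact hedge2.symm
        · exact absurd hab (hqonly (x + i) (by omega) (by omega))
      · exact absurd hab (G.irrefl)

lemma inducedReverse {a b : V} {w : G.Walk a b} (h : IsInducedPathW G w) :
    IsInducedPathW G w.reverse := by
  refine ⟨h.1.reverse, ?_⟩
  intro c d hc hd hcd
  rw [Walk.support_reverse, List.mem_reverse] at hc hd
  rw [Walk.toSubgraph_reverse]
  exact h.2 c d hc hd hcd

lemma mkS1' (hemb : IsHoleEmb G n f) {p q : V} (x y : ℕ) (h2x : 2 ≤ x) (hxy : x < y)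
    (hyn : y ≤ n - 2)
    (hpy : G.Adj p (f y)) (hqx : G.Adj q (f x))
    (hponly : ∀ z : ℕ, x ≤ z → z < y → ¬G.Adj p (f z))
    (hqonly : ∀ z : ℕ, x < z → z ≤ y → ¬G.Adj q (f z))
    (hp : p ∉ Set.range f) (hq : q ∉ Set.range f) (hpq : p ≠ q) (hnadj : ¬G.Adj p q) :
    ∃ w : G.Walk p q, 2 ≤ w.length ∧
      (∀ r, r ∈ w.support ↔ r = p ∨ r = q ∨ ∃ z : ℕ, x ≤ z ∧ z ≤ y ∧ r = f z) ∧
      IsInducedPathW G w := by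
  obtain ⟨w, hlen, hsup, hind⟩ := mkS1 hemb x y h2x hxy hyn hqx hpy hqonly hponly hq hp
    (Ne.symm hpq) (fun h => hnadj h.symm)
  refine ⟨w.reverse, by simpa using hlen, ?_, inducedReverse hind⟩
  intro r
  rw [Walk.support_reverse, List.mem_reverse, hsup r]
  tauto

lemma mkHalf (hemb : IsHoleEmb G n f) {p : V} (x y : ℕ) (h2x : 2 ≤ x) (hxy : x < y)
    (hyn : y ≤ n - 2)
    (hpx : G.Adj p (f x))
    (hponly : ∀ z : ℕ, x < z → z ≤ y → ¬G.Adj p (f z))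
    (hp : p ∉ Set.range f) :
    ∃ w : G.Walk p (f y), w.length = y - x + 1 ∧
      (∀ r, r ∈ w.support ↔ r = p ∨ ∃ z : ℕ, x ≤ z ∧ z ≤ y ∧ r = f z) ∧
      IsInducedPathW G w := by
  have h4 := hemb.1
  have hyx : (y : ZMod n) = (x : ZMod n) + ((y - x : ℕ) : ZMod n) := by
    have : ((x + (y - x) : ℕ) : ZMod n) = (y : ZMod n) := by congr 1; omega
    rw [← this]; push_cast; ring
  obtain ⟨w0, hlen0, hsup0, hadj0, hadj0'⟩ := exists_holeWalk hemb (y - x) (x : ℕ) (y : ℕ) hyx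
  have hmem0 : ∀ r, r ∈ w0.support ↔ ∃ i : ℕ, i ≤ y - x ∧ r = f ((x + i : ℕ)) := by
    intro r
    rw [hsup0]
    simp only [List.mem_map, List.mem_range]
    constructor
    · rintro ⟨i, hi, rfl⟩; exact ⟨i, by omega, (fadd f x i)⟩
    · rintro ⟨i, hi, rfl⟩; exact ⟨i, by omega, (fadd f x i)⟩
  refine ⟨Walk.cons hpx w0, by simp [hlen0], ?_, ?_, ?_⟩
  · intro r
    simp only [Walk.support_cons, List.mem_cons]
    rw [hmem0 r]
    constructor
    · rintro (rfl | ⟨i, hi, rfl⟩)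
      · exact Or.inl rfl
      · exact Or.inr ⟨x + i, by omega, by omega, rfl⟩
    · rintro (rfl | ⟨z, hz1, hz2, rfl⟩)
      · exact Or.inl rfl
      · exact Or.inr ⟨z - x, by omega, by congr 1; congr 1; omega⟩
  · rw [Walk.isPath_def]
    simp only [Walk.support_cons]
    rw [List.nodup_cons]
    constructor
    · intro hmem
      rcases (hmem0 p).mp hmem with ⟨i, _, hpi⟩
      exact hp ⟨_, hpi.symm⟩
    · rw [hsup0]
      exact holeNodup hemb (by omega) x (by omega) (by omega)
  · intro a b ha hb hab
    simp only [Walk.support_cons, List.mem_cons] at ha hb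
    have hTS : ∀ c d : V, w0.toSubgraph.Adj c d →
        (Walk.cons hpx w0).toSubgraph.Adj c d := by
      intro c d h
      simp only [Walk.toSubgraph]
      exact Subgraph.sup_adj.mpr (Or.inr h)
    have hedge1 : (Walk.cons hpx w0).toSubgraph.Adj p (f x) := by
      simp only [Walk.toSubgraph]
      exact Subgraph.sup_adj.mpr (Or.inl (by simp [subgraphOfAdj_adj]))
    have hhole : ∀ i j : ℕ, i ≤ y - x → j ≤ y - x → G.Adj (f ((x+i:ℕ))) (f ((x+j:ℕ))) →
        (Walk.cons hpx w0).toSubgraph.Adj (f ((x+i:ℕ))) (f ((x+j:ℕ))) := by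
      intro i j hi hj hadj
      rcases (hemb.2.2 _ _).mp hadj with h' | h'
      · have : ((x + j : ℕ) : ZMod n) = ((x + i + 1 : ℕ) : ZMod n) := by
          push_cast at h' ⊢; linear_combination h'
        have hji : x + j = x + i + 1 := castinj (by omega) (by omega) (by omega) this
        have hik : i < y - x := by omega
        have h5 := hadj0 i hik
        rw [fadd f x i, fadd1 f x i] at h5
        rw [show x + j = x + i + 1 from hji]
        exact hTS _ _ h5
      · have : ((x + i : ℕ) : ZMod n) = ((x + j + 1 : ℕ) : ZMod n) := by
          push_cast at h' ⊢; linear_combination h'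
        have hij' : x + i = x + j + 1 := castinj (by omega) (by omega) (by omega) this
        have hjk : j < y - x := by omega
        have h5 := hadj0 j hjk
        rw [fadd f x j, fadd1 f x j] at h5
        rw [show x + i = x + j + 1 from hij']
        exact (hTS _ _ h5).symm
    rcases ha with rfl | ha
    · rcases hb with rfl | hb
      · exact absurd hab (G.irrefl)
      · rcases (hmem0 b).mp hb with ⟨i, hi, rfl⟩
        rcases Nat.eq_zero_or_pos i with rfl | hpos
        · simpa using hedge1
        · exact absurd hab (by simpa using hponly (x + i) (by omega) (by omega))
    · rcases (hmem0 a).mp ha with ⟨i, hi, rfl⟩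
      rcases hb with rfl | hb
      · rcases Nat.eq_zero_or_pos i with rfl | hpos
        · simpa using hedge1.symm
        · exact absurd hab.symm (by simpa using hponly (x + i) (by omega) (by omega))
      · rcases (hmem0 b).mp hb with ⟨j, hj, rfl⟩
        exact hhole i j hi hj hab

lemma mkHalf' (hemb : IsHoleEmb G n f) {p : V} (x y : ℕ) (h2x : 2 ≤ x) (hxy : x < y)
    (hyn : y ≤ n - 2)
    (hpy : G.Adj p (f y))
    (hponly : ∀ z : ℕ, x ≤ z → z < y → ¬G.Adj p (f z))
    (hp : p ∉ Set.range f) :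
    ∃ w : G.Walk p (f x), w.length = y - x + 1 ∧
      (∀ r, r ∈ w.support ↔ r = p ∨ ∃ z : ℕ, x ≤ z ∧ z ≤ y ∧ r = f z) ∧
      IsInducedPathW G w := by
  have h4 := hemb.1
  have hyx : (y : ZMod n) = (x : ZMod n) + ((y - x : ℕ) : ZMod n) := by
    have : ((x + (y - x) : ℕ) : ZMod n) = (y : ZMod n) := by congr 1; omega
    rw [← this]; push_cast; ring
  obtain ⟨w0, hlen0, hsup0, hadj0, hadj0'⟩ := exists_holeWalk hemb (y - x) (x : ℕ) (y : ℕ) hyx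
  have hmem0 : ∀ r, r ∈ w0.support ↔ ∃ i : ℕ, i ≤ y - x ∧ r = f ((x + i : ℕ)) := by
    intro r
    rw [hsup0]
    simp only [List.mem_map, List.mem_range]
    constructor
    · rintro ⟨i, hi, rfl⟩; exact ⟨i, by omega, (fadd f x i)⟩
    · rintro ⟨i, hi, rfl⟩; exact ⟨i, by omega, (fadd f x i)⟩
  refine ⟨Walk.cons hpy w0.reverse, by simp [hlen0], ?_, ?_, ?_⟩
  · intro r
    simp only [Walk.support_cons, List.mem_cons, Walk.support_reverse, List.mem_reverse]
    rw [hmem0 r]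
    constructor
    · rintro (rfl | ⟨i, hi, rfl⟩)
      · exact Or.inl rfl
      · exact Or.inr ⟨x + i, by omega, by omega, rfl⟩
    · rintro (rfl | ⟨z, hz1, hz2, rfl⟩)
      · exact Or.inl rfl
      · exact Or.inr ⟨z - x, by omega, by congr 1; congr 1; omega⟩
  · rw [Walk.isPath_def]
    simp only [Walk.support_cons, Walk.support_reverse]
    rw [List.nodup_cons]
    constructor
    · rw [List.mem_reverse]
      intro hmem
      rcases (hmem0 p).mp hmem with ⟨i, _, hpi⟩
      exact hp ⟨_, hpi.symm⟩
    · rw [List.nodup_reverse, hsup0]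
      exact holeNodup hemb (by omega) x (by omega) (by omega)
  · intro a b ha hb hab
    simp only [Walk.support_cons, List.mem_cons, Walk.support_reverse, List.mem_reverse] at ha hb
    have hTS : ∀ c d : V, w0.toSubgraph.Adj c d →
        (Walk.cons hpy w0.reverse).toSubgraph.Adj c d := by
      intro c d h
      simp only [Walk.toSubgraph, Walk.toSubgraph_reverse]
      exact Subgraph.sup_adj.mpr (Or.inr h)
    have hedge1 : (Walk.cons hpy w0.reverse).toSubgraph.Adj p (f y) := by
      simp only [Walk.toSubgraph]
      exact Subgraph.sup_adj.mpr (Or.inl (by simp [subgraphOfAdj_adj]))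
    have hhole : ∀ i j : ℕ, i ≤ y - x → j ≤ y - x → G.Adj (f ((x+i:ℕ))) (f ((x+j:ℕ))) →
        (Walk.cons hpy w0.reverse).toSubgraph.Adj (f ((x+i:ℕ))) (f ((x+j:ℕ))) := by
      intro i j hi hj hadj
      rcases (hemb.2.2 _ _).mp hadj with h' | h'
      · have : ((x + j : ℕ) : ZMod n) = ((x + i + 1 : ℕ) : ZMod n) := by
          push_cast at h' ⊢; linear_combination h'
        have hji : x + j = x + i + 1 := castinj (by omega) (by omega) (by omega) this
        have hik : i < y - x := by omega
        have h5 := hadj0 i hik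
        rw [fadd f x i, fadd1 f x i] at h5
        rw [show x + j = x + i + 1 from hji]
        exact hTS _ _ h5
      · have : ((x + i : ℕ) : ZMod n) = ((x + j + 1 : ℕ) : ZMod n) := by
          push_cast at h' ⊢; linear_combination h'
        have hij' : x + i = x + j + 1 := castinj (by omega) (by omega) (by omega) this
        have hjk : j < y - x := by omega
        have h5 := hadj0 j hjk
        rw [fadd f x j, fadd1 f x j] at h5
        rw [show x + i = x + j + 1 from hij']
        exact (hTS _ _ h5).symm
    rcases ha with rfl | ha
    · rcases hb with rfl | hb
      · exact absurd hab (G.irrefl)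
      · rcases (hmem0 b).mp hb with ⟨i, hi, rfl⟩
        rcases Nat.eq_or_lt_of_le hi with heq | hik
        · have hxy2 : x + i = y := by omega
          rw [hxy2]
          simpa [hxy2] using hedge1
        · exact absurd hab (by simpa using hponly (x + i) (by omega) (by omega))
    · rcases (hmem0 a).mp ha with ⟨i, hi, rfl⟩
      rcases hb with rfl | hb
      · rcases Nat.eq_or_lt_of_le hi with heq | hik
        · have hxy2 : x + i = y := by omega
          rw [hxy2]
          simpa [hxy2] using hedge1.symm
        · exact absurd hab.symm (by simpa using hponly (x + i) (by omega) (by omega))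
      · rcases (hmem0 b).mp hb with ⟨j, hj, rfl⟩
        exact hhole i j hi hj hab

lemma valCast (hn : 0 < n) (m : ZMod n) : ((m.val : ℕ) : ZMod n) = m := by
  haveI : NeZero n := ⟨hn.ne'⟩
  exact (ZMod.natCast_val m).trans (ZMod.cast_id _ _)

lemma noTri (hTri : G.CliqueFree 3) {x y z : V} (h1 : G.Adj x y) (h2 : G.Adj y z)
    (h3 : G.Adj x z) : False :=
  hTri {x, y, z} (is3Clique_triple_iff.mpr ⟨h1, h3, h2⟩)

lemma posVal (hemb : IsHoleEmb G n f) (hTri : G.CliqueFree 3) {u : V} (hu0 : G.Adj u (f 0))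
    {m : ZMod n} (hm : G.Adj u (f m)) : m = 0 ∨ (2 ≤ m.val ∧ m.val ≤ n - 2) := by
  have h4 := hemb.1
  haveI : NeZero n := ⟨by omega⟩
  by_cases h0 : m = 0
  · exact Or.inl h0
  right
  have hlt : m.val < n := ZMod.val_lt m
  have hne : m.val ≠ 0 := fun h => h0 (by rw [← valCast (by omega) m, h]; simp)
  constructor
  · by_contra h
    have h1 : m.val = 1 := by omega
    have hm1 : m = 1 := by rw [← valCast (by omega) m, h1]; simp
    have hadj01 : G.Adj (f 0) (f 1) := (hemb.2.2 0 1).mpr (Or.inl (by ring))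
    exact noTri hTri hu0 hadj01 (by rwa [hm1] at hm)
  · by_contra h
    have h1 : m.val = n - 1 := by omega
    have hadj : G.Adj (f m) (f 0) := by
      refine (hemb.2.2 m 0).mpr (Or.inl ?_)
      rw [← valCast (by omega) m, h1]
      have : ((n - 1 : ℕ) : ZMod n) + 1 = ((n - 1 + 1 : ℕ) : ZMod n) := by push_cast; ring
      rw [this, show n - 1 + 1 = n from by omega]
      simp [ZMod.natCast_self]
    exact noTri hTri hm hadj hu0

lemma nested_split (hn : 4 ≤ n) {u v : V}
    (huA : ∀ m : ZMod n, G.Adj u (f m) → m = 0 ∨ (2 ≤ m.val ∧ m.val ≤ n - 2))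
    (hvB : ∀ m : ZMod n, G.Adj v (f m) → m = 0 ∨ (2 ≤ m.val ∧ m.val ≤ n - 2))
    (p : ℕ) (hp2 : 2 ≤ p) (hpn : p ≤ n - 2)
    (hA : ∀ m : ZMod n, G.Adj u (f m) → m ≠ 0 → m.val ≤ p)
    (hB : ∀ m : ZMod n, G.Adj v (f m) → m ≠ 0 → p ≤ m.val) :
    NestedCfg G n f u v := by
  haveI : NeZero n := ⟨by omega⟩
  refine ⟨0, p, by omega, by omega, ?_, ?_⟩
  · intro m hm
    by_cases h0 : m = 0
    · exact ⟨0, by omega, by simp [h0]⟩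
    · exact ⟨m.val, hA m hm h0, by rw [zero_add, valCast (by omega) m]⟩
  · intro m hm
    by_cases h0 : m = 0
    · refine ⟨n - p, by omega, ?_⟩
      rw [zero_add, h0]
      rw [show ((p:ℕ):ZMod n) + ((n - p:ℕ):ZMod n) = ((p + (n-p) :ℕ):ZMod n) from by push_cast; ring]
      rw [show p + (n - p) = n from by omega]
      simp [ZMod.natCast_self]
    · have hB' := hB m hm h0
      have := hvB m hm
      rcases this with h | ⟨h1, h2⟩
      · exact absurd h h0
      refine ⟨m.val - p, by omega, ?_⟩
      rw [zero_add]
      rw [show ((p:ℕ):ZMod n) + ((m.val - p:ℕ):ZMod n) = ((p + (m.val - p) :ℕ):ZMod n) from by push_cast; ring]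
      rw [show p + (m.val - p) = m.val from by omega, valCast (by omega) m]

lemma nested_split' (hn : 4 ≤ n) {u v : V}
    (huA : ∀ m : ZMod n, G.Adj u (f m) → m = 0 ∨ (2 ≤ m.val ∧ m.val ≤ n - 2))
    (hvB : ∀ m : ZMod n, G.Adj v (f m) → m = 0 ∨ (2 ≤ m.val ∧ m.val ≤ n - 2))
    (p : ℕ) (hp2 : 2 ≤ p) (hpn : p ≤ n - 2)
    (hA : ∀ m : ZMod n, G.Adj u (f m) → m ≠ 0 → p ≤ m.val)
    (hB : ∀ m : ZMod n, G.Adj v (f m) → m ≠ 0 → m.val ≤ p) :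
    NestedCfg G n f u v := by
  haveI : NeZero n := ⟨by omega⟩
  have hpn0 : ((p:ℕ):ZMod n) + ((n - p:ℕ):ZMod n) = 0 := by
    rw [show ((p:ℕ):ZMod n) + ((n - p:ℕ):ZMod n) = ((p + (n-p) :ℕ):ZMod n) from by push_cast; ring]
    rw [show p + (n - p) = n from by omega]
    simp [ZMod.natCast_self]
  refine ⟨(p : ZMod n), n - p, by omega, by omega, ?_, ?_⟩
  · intro m hm
    by_cases h0 : m = 0
    · exact ⟨n - p, by omega, by rw [h0, hpn0]⟩
    · have hA' := hA m hm h0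
      rcases huA m hm with h | ⟨h1, h2⟩
      · exact absurd h h0
      refine ⟨m.val - p, by omega, ?_⟩
      rw [show ((p:ℕ):ZMod n) + ((m.val - p:ℕ):ZMod n) = ((p + (m.val - p) :ℕ):ZMod n) from by push_cast; ring]
      rw [show p + (m.val - p) = m.val from by omega, valCast (by omega) m]
  · intro m hm
    rw [hpn0]
    by_cases h0 : m = 0
    · exact ⟨0, by omega, by simp [h0]⟩
    · have hB' := hB m hm h0
      rcases hvB m hm with h | ⟨h1, h2⟩
      · exact absurd h h0
      refine ⟨m.val, by omega, by rw [zero_add, valCast (by omega) m]⟩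

lemma extract (X Y : Finset ℕ) : ∀ (N a b : ℕ), a ∈ X → b ∈ Y → a ≤ b → b - a ≤ N →
    (∃ c, c ∈ X ∧ c ∈ Y ∧ a ≤ c ∧ c ≤ b) ∨
    (∃ x y, a ≤ x ∧ x < y ∧ y ≤ b ∧ x ∈ X ∧ x ∉ Y ∧ y ∈ Y ∧ y ∉ X ∧
       ∀ z, x < z → z < y → z ∉ X ∧ z ∉ Y) := by
  intro N
  induction N with
  | zero =>
    intro a b ha hb hab hN
    have : a = b := by omega
    exact Or.inl ⟨a, ha, this ▸ hb, le_refl a, by omega⟩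
  | succ N ih =>
    intro a b ha hb hab hN
    rcases Nat.eq_or_lt_of_le hab with rfl | hlt
    · exact Or.inl ⟨a, ha, hb, le_refl a, le_refl a⟩
    by_cases haY : a ∈ Y
    · exact Or.inl ⟨a, ha, haY, le_refl a, by omega⟩
    by_cases hbX : b ∈ X
    · exact Or.inl ⟨b, hbX, hb, by omega, le_refl b⟩
    rcases Finset.eq_empty_or_nonempty ((Finset.Ioo a b).filter (fun z => z ∈ X ∨ z ∈ Y)) with hD | hD
    · refine Or.inr ⟨a, b, le_refl a, hlt, le_refl b, ha, haY, hb, hbX, ?_⟩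
      intro z hz1 hz2
      have : z ∉ (Finset.Ioo a b).filter (fun z => z ∈ X ∨ z ∈ Y) := by rw [hD]; simp
      simp only [Finset.mem_filter, Finset.mem_Ioo] at this
      push_neg at this
      have := this ⟨hz1, hz2⟩
      tauto
    · obtain ⟨z, hz⟩ := hD
      simp only [Finset.mem_filter, Finset.mem_Ioo] at hz
      obtain ⟨⟨hz1, hz2⟩, hz3 | hz3⟩ := hz
      · rcases ih z b hz3 hb (by omega) (by omega) with ⟨c, h1, h2, h3, h4⟩ | ⟨x, y, h1, h2, h3, h4⟩
        · exact Or.inl ⟨c, h1, h2, by omega, h4⟩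
        · exact Or.inr ⟨x, y, by omega, h2, h3, h4⟩
      · rcases ih a z ha hz3 (by omega) (by omega) with ⟨c, h1, h2, h3, h4⟩ | ⟨x, y, h1, h2, h3, h4⟩
        · exact Or.inl ⟨c, h1, h2, h3, by omega⟩
        · exact Or.inr ⟨x, y, h1, h2, by omega, h4⟩

lemma assembleTypeI (hemb : IsHoleEmb G n f) {u v : V}
    (x1 y1 x2 y2 x3 y3 : ℕ)
    (h11 : x1 ≤ y1) (h12 : y1 + 2 ≤ x2) (h22 : x2 ≤ y2) (h23 : y2 + 2 ≤ x3)
    (h33 : x3 ≤ y3) (h3n : y3 ≤ n - 2)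
    (w1 w2 w3 : G.Walk u v)
    (hs1 : ∀ r, r ∈ w1.support ↔ r = u ∨ r = v ∨ ∃ z : ℕ, x1 ≤ z ∧ z ≤ y1 ∧ r = f z)
    (hs2 : ∀ r, r ∈ w2.support ↔ r = u ∨ r = v ∨ ∃ z : ℕ, x2 ≤ z ∧ z ≤ y2 ∧ r = f z)
    (hs3 : ∀ r, r ∈ w3.support ↔ r = u ∨ r = v ∨ ∃ z : ℕ, x3 ≤ z ∧ z ≤ y3 ∧ r = f z)
    (hi1 : IsInducedPathW G w1) (hi2 : IsInducedPathW G w2) (hi3 : IsInducedPathW G w3)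
    (hl1 : 2 ≤ w1.length) (hl2 : 2 ≤ w2.length) (hl3 : 2 ≤ w3.length) :
    ContainsTheta G := by
  have h4 := hemb.1
  have key : ∀ (xa ya xb yb : ℕ), ya + 2 ≤ xb → yb ≤ n - 2 →
      ∀ r s : V, (r = u ∨ r = v ∨ ∃ z : ℕ, xa ≤ z ∧ z ≤ ya ∧ r = f z) →
        (s = u ∨ s = v ∨ ∃ z : ℕ, xb ≤ z ∧ z ≤ yb ∧ s = f z) →
        r ≠ u → r ≠ v → s ≠ u → s ≠ v → (r ≠ s ∧ ¬G.Adj r s) := by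
    intro xa ya xb yb hab hbn r s hr hs hru hrv hsu hsv
    rcases hr with rfl | rfl | ⟨z, hz1, hz2, rfl⟩
    · exact absurd rfl hru
    · exact absurd rfl hrv
    rcases hs with rfl | rfl | ⟨z', hz1', hz2', rfl⟩
    · exact absurd rfl hsu
    · exact absurd rfl hsv
    constructor
    · intro h
      have := hemb.2.1 h
      have := castinj (by omega) (by omega) (by omega) this
      omega
    · exact holeNotAdj hemb (by omega) (by omega)
  refine ⟨u, v, w1, w2, w3, ⟨hi1, hi2, hi3⟩, ⟨hl1, hl2, hl3⟩, ?_, ?_⟩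
  · intro w hw
    by_contra hcon
    push_neg at hcon
    obtain ⟨hwu, hwv⟩ := hcon
    rcases hw with ⟨h1, h2⟩ | ⟨h1, h2⟩ | ⟨h1, h2⟩
    · exact ((key x1 y1 x2 y2 (by omega) (by omega) w w ((hs1 w).mp h1) ((hs2 w).mp h2)
        hwu hwv hwu hwv).1) rfl
    · exact ((key x1 y1 x3 y3 (by omega) (by omega) w w ((hs1 w).mp h1) ((hs3 w).mp h2)
        hwu hwv hwu hwv).1) rfl
    · exact ((key x2 y2 x3 y3 (by omega) (by omega) w w ((hs2 w).mp h1) ((hs3 w).mp h2)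
        hwu hwv hwu hwv).1) rfl
  · intro a b hau hbv hbu hbv' hmem
    rcases hmem with ⟨h1, h2⟩ | ⟨h1, h2⟩ | ⟨h1, h2⟩
    · exact (key x1 y1 x2 y2 (by omega) (by omega) a b ((hs1 a).mp h1) ((hs2 b).mp h2)
        hau hbv hbu hbv').2
    · exact (key x1 y1 x3 y3 (by omega) (by omega) a b ((hs1 a).mp h1) ((hs3 b).mp h2)
        hau hbv hbu hbv').2
    · exact (key x2 y2 x3 y3 (by omega) (by omega) a b ((hs2 a).mp h1) ((hs3 b).mp h2)
        hau hbv hbu hbv').2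

lemma key2 (hemb : IsHoleEmb G n f) (hTri : G.CliqueFree 3) {u v : V}
    (hu : u ∉ Set.range f) (hv : v ∉ Set.range f) (hne : u ≠ v) (huv : ¬G.Adj u v)
    (hu0 : G.Adj u (f 0)) (hv0 : G.Adj v (f 0))
    (A B : Finset ℕ)
    (hA : ∀ a : ℕ, a ∈ A ↔ 2 ≤ a ∧ a ≤ n - 2 ∧ G.Adj u (f a))
    (hB : ∀ b : ℕ, b ∈ B ↔ 2 ≤ b ∧ b ≤ n - 2 ∧ G.Adj v (f b))
    (hdisj : ∀ c : ℕ, ¬(c ∈ A ∧ c ∈ B))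
    (hAne : A.Nonempty) (hBne : B.Nonempty)
    (hmin : A.min' hAne < B.min' hBne)
    (hcross : ∃ a ∈ A, ∃ b ∈ B, b < a) :
    ContainsTheta G := by
  classical
  have h4 := hemb.1
  set b := B.min' hBne with hbdef
  have hbB : b ∈ B := B.min'_mem hBne
  have hb2 : 2 ≤ b := ((hB b).mp hbB).1
  have hbn : b ≤ n - 2 := ((hB b).mp hbB).2.1
  have hvb : G.Adj v (f b) := ((hB b).mp hbB).2.2
  have hbnA : b ∉ A := fun h => hdisj b ⟨h, hbB⟩
  have hBlow : ∀ z : ℕ, 2 ≤ z → z < b → z ∉ B := by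
    intro z h2 hz hzB
    exact absurd (B.min'_le z hzB) (by omega)
  -- a⁻
  have hLne : (A.filter (· < b)).Nonempty := by
    refine ⟨A.min' hAne, ?_⟩
    simp only [Finset.mem_filter]
    exact ⟨A.min'_mem hAne, hmin⟩
  set aL := (A.filter (· < b)).max' hLne with haLdef
  have haLmem := (A.filter (· < b)).max'_mem hLne
  rw [Finset.mem_filter] at haLmem
  obtain ⟨haLA, haLb⟩ := haLmem
  have haL2 : 2 ≤ aL := ((hA aL).mp haLA).1
  have huaL : G.Adj u (f aL) := ((hA aL).mp haLA).2.2
  -- a⁺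
  have hRne : (A.filter (fun a => b < a)).Nonempty := by
    obtain ⟨a, haA, b', hb'B, hlt⟩ := hcross
    have : b ≤ b' := B.min'_le b' hb'B
    exact ⟨a, by simp only [Finset.mem_filter]; exact ⟨haA, by omega⟩⟩
  set aR := (A.filter (fun a => b < a)).min' hRne with haRdef
  have haRmem := (A.filter (fun a => b < a)).min'_mem hRne
  rw [Finset.mem_filter] at haRmem
  obtain ⟨haRA, haRb⟩ := haRmem
  have haRn : aR ≤ n - 2 := ((hA aR).mp haRA).2.1
  have huaR : G.Adj u (f aR) := ((hA aR).mp haRA).2.2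
  -- gap facts
  have hAgap1 : ∀ z : ℕ, aL < z → z ≤ b → ¬G.Adj u (f z) := by
    intro z h1 h2 hadj
    have hzA : z ∈ A := (hA z).mpr ⟨by omega, by omega, hadj⟩
    rcases Nat.lt_or_ge z b with h | h
    · have : z ∈ A.filter (· < b) := by simp only [Finset.mem_filter]; exact ⟨hzA, h⟩
      exact absurd ((A.filter (· < b)).le_max' z this) (by omega)
    · have : z = b := by omega
      exact hbnA (this ▸ hzA)
  have hAgap2 : ∀ z : ℕ, b ≤ z → z < aR → ¬G.Adj u (f z) := by
    intro z h1 h2 hadj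
    have hzA : z ∈ A := (hA z).mpr ⟨by omega, by omega, hadj⟩
    rcases Nat.lt_or_ge b z with h | h
    · have : z ∈ A.filter (fun a => b < a) := by simp only [Finset.mem_filter]; exact ⟨hzA, h⟩
      exact absurd ((A.filter (fun a => b < a)).min'_le z this) (by omega)
    · have : z = b := by omega
      exact hbnA (this ▸ hzA)
  have hBgap1 : ∀ z : ℕ, aL ≤ z → z < b → ¬G.Adj v (f z) := by
    intro z h1 h2 hadj
    exact hBlow z (by omega) h2 ((hB z).mpr ⟨by omega, by omega, hadj⟩)
  rcases Finset.eq_empty_or_nonempty (B.filter (fun z => b < z ∧ z < aR)) with hS | hSne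
  · -- theta with ends u and f b
    have hBgap2 : ∀ z : ℕ, b < z → z ≤ aR → ¬G.Adj v (f z) := by
      intro z h1 h2 hadj
      have hzB : z ∈ B := (hB z).mpr ⟨by omega, by omega, hadj⟩
      rcases Nat.lt_or_ge z aR with h | h
      · have : z ∈ B.filter (fun z => b < z ∧ z < aR) := by
          simp only [Finset.mem_filter]; exact ⟨hzB, h1, h⟩
        rw [hS] at this
        simp at this
      · have : z = aR := by omega
        exact hdisj aR ⟨haRA, this ▸ hzB⟩
    obtain ⟨w1, hl1, hs1, hi1⟩ := mkHalf hemb aL b haL2 haLb hbn huaL hAgap1 hu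
    obtain ⟨w2, hl2, hs2, hi2⟩ := mkHalf' hemb b aR hb2 haRb haRn huaR hAgap2 hu
    have hnub : ¬G.Adj u (f b) := hAgap1 b haLb (le_refl b)
    have hn0z : ∀ z : ℕ, 2 ≤ z → z ≤ n - 2 → ¬G.Adj (f 0) (f (z:ℕ)) := fun z h1 h2 => by
      simpa using holeNotAdj hemb (r := 0) (s := z) (by omega) h2
    have hn0b : ¬G.Adj (f 0) (f (b:ℕ)) := hn0z b hb2 hbn
    have hfb0 : f (0 : ZMod n) ≠ f b := by
      intro h
      have := castinj (n := n) (by omega) (by omega) (by omega)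
        (by simpa using hemb.2.1 (by simpa using h) : ((0:ℕ) : ZMod n) = (b:ℕ))
      omega
    have hub : u ≠ f b := fun h => hu ⟨_, h.symm⟩
    have hvb' : v ≠ f b := fun h => hv ⟨_, h.symm⟩
    have hu0' : u ≠ f 0 := fun h => hu ⟨_, h.symm⟩
    have hv0' : v ≠ f 0 := fun h => hv ⟨_, h.symm⟩
    let w3 : G.Walk u (f (b:ℕ)) :=
      Walk.cons hu0 (Walk.cons hv0.symm (Walk.cons hvb Walk.nil))
    have hs3 : w3.support = [u, f 0, v, f (b:ℕ)] := rfl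
    have hi3 : IsInducedPathW G w3 := by
      constructor
      · rw [Walk.isPath_def, hs3]
        simp only [List.nodup_cons, List.mem_cons, List.mem_singleton, List.not_mem_nil,
          or_false, List.nodup_nil, and_true, not_or]
        exact ⟨⟨hu0', hne, hub⟩, ⟨fun h => hv ⟨_, h⟩, hfb0⟩, hvb', not_false⟩
      · intro c d hc hd hcd
        rw [hs3] at hc hd
        simp only [List.mem_cons, List.mem_singleton, List.not_mem_nil, or_false] at hc hd
        rcases hc with rfl | rfl | rfl | rfl <;> rcases hd with rfl | rfl | rfl | rfl
        · exact absurd hcd (G.irrefl)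
        · simp only [w3, Walk.toSubgraph]
          exact Subgraph.sup_adj.mpr (Or.inl (by simp [subgraphOfAdj_adj]))
        · exact absurd hcd huv
        · exact absurd hcd hnub
        · simp only [w3, Walk.toSubgraph]
          exact Subgraph.sup_adj.mpr (Or.inl (by simp [subgraphOfAdj_adj]))
        · exact absurd hcd (G.irrefl)
        · simp only [w3, Walk.toSubgraph]
          exact Subgraph.sup_adj.mpr (Or.inr (Subgraph.sup_adj.mpr (Or.inl (by simp [subgraphOfAdj_adj]))))
        · exact absurd hcd hn0b
        · exact absurd hcd (fun h => huv h.symm)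
        · simp only [w3, Walk.toSubgraph]
          exact Subgraph.sup_adj.mpr (Or.inr (Subgraph.sup_adj.mpr (Or.inl (by simp [subgraphOfAdj_adj]))))
        · exact absurd hcd (G.irrefl)
        · simp only [w3, Walk.toSubgraph]
          exact Subgraph.sup_adj.mpr (Or.inr (Subgraph.sup_adj.mpr (Or.inr (Subgraph.sup_adj.mpr (Or.inl (by simp [subgraphOfAdj_adj]))))))
        · exact absurd hcd (fun h => hnub h.symm)
        · exact absurd hcd (fun h => hn0b h.symm)
        · simp only [w3, Walk.toSubgraph]
          exact Subgraph.sup_adj.mpr (Or.inr (Subgraph.sup_adj.mpr (Or.inr (Subgraph.sup_adj.mpr (Or.inl (by simp [subgraphOfAdj_adj]))))))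
        · exact absurd hcd (G.irrefl)
    have hmem3 : ∀ r, r ∈ w3.support ↔ r = u ∨ r = f 0 ∨ r = v ∨ r = f (b:ℕ) := by
      intro r
      rw [hs3]
      simp
    have hfz : ∀ z z' : ℕ, z ≤ n - 2 → z' ≤ n - 2 → f (z:ℕ) = f (z':ℕ) → z = z' := by
      intro z z' hz hz' h
      exact castinj (by omega) (by omega) (by omega) (hemb.2.1 h)
    have hcond3 : ∀ w : V, ((w ∈ w1.support ∧ w ∈ w2.support) ∨ (w ∈ w1.support ∧ w ∈ w3.support) ∨
        (w ∈ w2.support ∧ w ∈ w3.support)) → (w = u ∨ w = f (b:ℕ)) := by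
      intro w hw
      have hgen : ∀ r : V, (r = u ∨ ∃ z : ℕ, aL ≤ z ∧ z ≤ b ∧ r = f (z:ℕ)) →
          r ∈ w3.support → r = u ∨ r = f (b:ℕ) := by
        rintro r (rfl | ⟨z, hz1, hz2, rfl⟩) h3
        · exact Or.inl rfl
        rcases (hmem3 _).mp h3 with heq | heq | heq | heq
        · exact absurd heq (fun h => hu ⟨_, h⟩)
        · have hz0 : z = 0 := by
            have h7 := hemb.2.1 heq
            exact castinj (n := n) (r := z) (s := 0) (by omega) (by omega) (by omega)
              (by simpa using h7)
          subst hz0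
          exact absurd hz1 (by omega)
        · exact absurd heq (fun h => hv ⟨_, h⟩)
        · exact Or.inr heq
      have hgen2 : ∀ r : V, (r = u ∨ ∃ z : ℕ, b ≤ z ∧ z ≤ aR ∧ r = f (z:ℕ)) →
          r ∈ w3.support → r = u ∨ r = f (b:ℕ) := by
        rintro r (rfl | ⟨z, hz1, hz2, rfl⟩) h3
        · exact Or.inl rfl
        rcases (hmem3 _).mp h3 with heq | heq | heq | heq
        · exact absurd heq (fun h => hu ⟨_, h⟩)
        · have hz0 : z = 0 := by
            have h7 := hemb.2.1 heq
            exact castinj (n := n) (r := z) (s := 0) (by omega) (by omega) (by omega)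
              (by simpa using h7)
          subst hz0
          exact absurd hz1 (by omega)
        · exact absurd heq (fun h => hv ⟨_, h⟩)
        · exact Or.inr heq
      rcases hw with ⟨h1, h2⟩ | ⟨h1, h2⟩ | ⟨h1, h2⟩
      · have m1 := (hs1 w).mp h1
        have m2 := (hs2 w).mp h2
        rcases m1 with rfl | ⟨z, hz1, hz2, hfz1⟩
        · exact Or.inl rfl
        rcases m2 with rfl | ⟨z', hz1', hz2', hfz2⟩
        · exact absurd hfz1 (fun h => hu ⟨_, h.symm⟩)
        · have heq : z = z' := hfz z z' (by omega) (by omega) (hfz1.symm.trans hfz2).symm.symm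
          have hzb : z = b := by omega
          rw [hfz1, hzb]
          exact Or.inr rfl
      · exact hgen w ((hs1 w).mp h1) h2
      · exact hgen2 w ((hs2 w).mp h1) h2
    have hcond4 : ∀ c d : V, c ≠ u → c ≠ f (b:ℕ) → d ≠ u → d ≠ f (b:ℕ) →
        ((c ∈ w1.support ∧ d ∈ w2.support) ∨ (c ∈ w1.support ∧ d ∈ w3.support) ∨
         (c ∈ w2.support ∧ d ∈ w3.support)) → ¬G.Adj c d := by
      intro c d hc1 hc2 hd1 hd2 hmem
      rcases hmem with ⟨h1, h2⟩ | ⟨h1, h2⟩ | ⟨h1, h2⟩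
      · rcases (hs1 c).mp h1 with rfl | ⟨z, hz1, hz2, rfl⟩
        · exact absurd rfl hc1
        rcases (hs2 d).mp h2 with rfl | ⟨z', hz1', hz2', rfl⟩
        · exact absurd rfl hd1
        have hzb : z ≠ b := fun h => hc2 (by rw [h])
        have hzb' : z' ≠ b := fun h => hd2 (by rw [h])
        exact holeNotAdj hemb (by omega) (by omega)
      · rcases (hs1 c).mp h1 with rfl | ⟨z, hz1, hz2, rfl⟩
        · exact absurd rfl hc1
        have hzb : z ≠ b := fun h => hc2 (by rw [h])
        rcases (hmem3 d).mp h2 with rfl | rfl | rfl | rfl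
        · exact absurd rfl hd1
        · exact fun h => hn0z z (by omega) (by omega) h.symm
        · exact fun h => hBgap1 z hz1 (by omega) h.symm
        · exact absurd rfl hd2
      · rcases (hs2 c).mp h1 with rfl | ⟨z, hz1, hz2, rfl⟩
        · exact absurd rfl hc1
        have hzb : z ≠ b := fun h => hc2 (by rw [h])
        rcases (hmem3 d).mp h2 with rfl | rfl | rfl | rfl
        · exact absurd rfl hd1
        · exact fun h => hn0z z (by omega) (by omega) h.symm
        · exact fun h => hBgap2 z (by omega) hz2 h.symm
        · exact absurd rfl hd2
    exact ⟨u, f (b:ℕ), w1, w2, w3, ⟨hi1, hi2, hi3⟩,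
      ⟨by rw [hl1]; omega, by rw [hl2]; omega, by simp [w3]⟩, hcond3, hcond4⟩
  · -- type I theta via assembleTypeI
    set b2 := (B.filter (fun z => b < z ∧ z < aR)).max' hSne with hb2def
    have hb2mem := (B.filter (fun z => b < z ∧ z < aR)).max'_mem hSne
    rw [Finset.mem_filter] at hb2mem
    obtain ⟨hb2B, hb2gt, hb2lt⟩ := hb2mem
    have hvb2 : G.Adj v (f b2) := ((hB b2).mp hb2B).2.2
    have hdistB : b + 2 ≤ b2 := by
      by_contra hcon
      have hb21 : b2 = b + 1 := by omega
      have : G.Adj (f b) (f (b+1:ℕ)) := by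
        have := holeAdj hemb (b : ℕ)
        rwa [show ((b:ℕ):ZMod n) + 1 = ((b+1:ℕ):ZMod n) from by push_cast; ring] at this
      have h6 : G.Adj (f (b:ℕ)) (f (b2:ℕ)) := by rw [hb21]; exact this
      exact noTri hTri hvb h6 hvb2
    have hBgap3 : ∀ z : ℕ, b2 < z → z ≤ aR → ¬G.Adj v (f z) := by
      intro z h1 h2 hadj
      have hzB : z ∈ B := (hB z).mpr ⟨by omega, by omega, hadj⟩
      rcases Nat.lt_or_ge z aR with h | h
      · have : z ∈ B.filter (fun z => b < z ∧ z < aR) := by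
          simp only [Finset.mem_filter]; exact ⟨hzB, by omega, h⟩
        exact absurd ((B.filter (fun z => b < z ∧ z < aR)).le_max' z this) (by omega)
      · have : z = aR := by omega
        exact hdisj aR ⟨haRA, this ▸ hzB⟩
    have hAgap3 : ∀ z : ℕ, b2 ≤ z → z < aR → ¬G.Adj u (f z) :=
      fun z h1 h2 => hAgap2 z (by omega) h2
    obtain ⟨w1, hl1, hs1, hi1⟩ := mkS0 hemb (0 : ZMod n) hne huv hu0 hv0 hu hv
    obtain ⟨w2, hl2, hs2, hi2⟩ := mkS1 hemb aL b haL2 haLb hbn huaL hvb hAgap1 hBgap1 hu hv hne huv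
    obtain ⟨w3, hl3, hs3, hi3⟩ := mkS1' hemb b2 aR (by omega) hb2lt haRn huaR hvb2 hAgap3
      (fun z h1 h2 => hBgap3 z h1 h2) hu hv hne huv
    refine assembleTypeI hemb 0 0 aL b b2 aR (le_refl 0) (by omega) (by omega) hdistB
      (by omega) haRn w1 w2 w3 ?_ hs2 hs3 hi1 hi2 hi3 (by omega) hl2 hl3
    intro r
    rw [hs1 r]
    constructor
    · rintro (rfl | rfl | rfl)
      · exact Or.inl rfl
      · exact Or.inr (Or.inl rfl)
      · exact Or.inr (Or.inr ⟨0, le_refl 0, le_refl 0, by simp⟩)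
    · rintro (rfl | rfl | ⟨z, hz1, hz2, rfl⟩)
      · exact Or.inl rfl
      · exact Or.inr (Or.inl rfl)
      · have : z = 0 := by omega
        subst this
        exact Or.inr (Or.inr (by simp))

lemma key (hemb : IsHoleEmb G n f) (hTri : G.CliqueFree 3) {u v : V}
    (hu : u ∉ Set.range f) (hv : v ∉ Set.range f) (hne : u ≠ v) (huv : ¬G.Adj u v)
    (hu0 : G.Adj u (f 0)) (hv0 : G.Adj v (f 0))
    (hAcard : 3 ≤ {m : ZMod n | G.Adj u (f m)}.ncard)
    (hBcard : 3 ≤ {m : ZMod n | G.Adj v (f m)}.ncard)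
    (hnot : ¬NestedCfg G n f u v) :
    ContainsTheta G := by
  classical
  have h4 := hemb.1
  haveI : NeZero n := ⟨by omega⟩
  set A : Finset ℕ := (Finset.Icc 2 (n-2)).filter (fun a => G.Adj u (f (a:ℕ))) with hAdef
  set B : Finset ℕ := (Finset.Icc 2 (n-2)).filter (fun b => G.Adj v (f (b:ℕ))) with hBdef
  have hA : ∀ a : ℕ, a ∈ A ↔ 2 ≤ a ∧ a ≤ n - 2 ∧ G.Adj u (f (a:ℕ)) := by
    intro a
    rw [hAdef, Finset.mem_filter, Finset.mem_Icc]
    tauto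
  have hB : ∀ b : ℕ, b ∈ B ↔ 2 ≤ b ∧ b ≤ n - 2 ∧ G.Adj v (f (b:ℕ)) := by
    intro b
    rw [hBdef, Finset.mem_filter, Finset.mem_Icc]
    tauto
  have hvalA : ∀ m : ZMod n, G.Adj u (f m) → m ≠ 0 → m.val ∈ A := by
    intro m hm h0
    rcases posVal hemb hTri hu0 hm with h | ⟨h1, h2⟩
    · exact absurd h h0
    · exact (hA m.val).mpr ⟨h1, h2, by rwa [valCast (by omega) m]⟩
  have hvalB : ∀ m : ZMod n, G.Adj v (f m) → m ≠ 0 → m.val ∈ B := by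
    intro m hm h0
    rcases posVal hemb hTri hv0 hm with h | ⟨h1, h2⟩
    · exact absurd h h0
    · exact (hB m.val).mpr ⟨h1, h2, by rwa [valCast (by omega) m]⟩
  have cardGen : ∀ (w : V) (C : Finset ℕ), 3 ≤ {m : ZMod n | G.Adj w (f m)}.ncard →
      (∀ m : ZMod n, G.Adj w (f m) → m ≠ 0 → m.val ∈ C) → 2 ≤ C.card := by
    intro w C hc hval
    have hsub : {m : ZMod n | G.Adj w (f m)} ⊆
        insert (0 : ZMod n) ((fun a : ℕ => ((a : ℕ) : ZMod n)) '' (C : Set ℕ)) := by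
      intro m hm
      by_cases h0 : m = 0
      · exact h0 ▸ Set.mem_insert _ _
      · exact Set.mem_insert_of_mem _ ⟨m.val, hval m hm h0, valCast (by omega) m⟩
    have h1 := Set.ncard_le_ncard hsub (Set.Finite.insert _ (((C : Set ℕ).toFinite).image _))
    have h2 := Set.ncard_insert_le (0 : ZMod n) ((fun a : ℕ => ((a : ℕ) : ZMod n)) '' (C : Set ℕ))
    have h3 := Set.ncard_image_le (f := fun a : ℕ => ((a : ℕ) : ZMod n)) (s := (C : Set ℕ))
      (C : Set ℕ).toFinite
    rw [Set.ncard_coe_finset] at h3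
    omega
  have cardA : 2 ≤ A.card := cardGen u A hAcard hvalA
  have cardB : 2 ≤ B.card := cardGen v B hBcard hvalB
  have hAne : A.Nonempty := Finset.card_pos.mp (by omega)
  have hBne : B.Nonempty := Finset.card_pos.mp (by omega)
  have hadj2 : ∀ z : ℕ, z ≤ n - 2 → G.Adj (f (z:ℕ)) (f ((z+1):ℕ)) := by
    intro z _
    have := holeAdj hemb (z : ℕ)
    rwa [show ((z:ℕ):ZMod n) + 1 = (((z+1):ℕ):ZMod n) from by push_cast; ring] at this
  have distA : ∀ p q : ℕ, p ∈ A → q ∈ A → p < q → p + 2 ≤ q := by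
    intro p q hp hq hpq
    by_contra hcon
    have hq1 : q = p + 1 := by omega
    have hpb := ((hA p).mp hp).2.1
    have := hadj2 p (by omega)
    exact noTri hTri ((hA p).mp hp).2.2 (hq1 ▸ this) ((hA q).mp hq).2.2
  have distB : ∀ p q : ℕ, p ∈ B → q ∈ B → p < q → p + 2 ≤ q := by
    intro p q hp hq hpq
    by_contra hcon
    have hq1 : q = p + 1 := by omega
    have hpb := ((hB p).mp hp).2.1
    have := hadj2 p (by omega)
    exact noTri hTri ((hB p).mp hp).2.2 (hq1 ▸ this) ((hB q).mp hq).2.2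
  have huA : ∀ m : ZMod n, G.Adj u (f m) → m = 0 ∨ (2 ≤ m.val ∧ m.val ≤ n - 2) :=
    fun m hm => posVal hemb hTri hu0 hm
  have hvB : ∀ m : ZMod n, G.Adj v (f m) → m = 0 ∨ (2 ≤ m.val ∧ m.val ≤ n - 2) :=
    fun m hm => posVal hemb hTri hv0 hm
  have cross1 : ∃ a ∈ A, ∃ b ∈ B, a < b := by
    by_contra hcon
    push_neg at hcon
    refine hnot (nested_split' h4 huA hvB (B.max' hBne) ?_ ?_ ?_ ?_)
    · exact ((hB _).mp (B.max'_mem hBne)).1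
    · exact ((hB _).mp (B.max'_mem hBne)).2.1
    · intro m hm h0
      exact hcon m.val (hvalA m hm h0) (B.max' hBne) (B.max'_mem hBne)
    · intro m hm h0
      exact B.le_max' _ (hvalB m hm h0)
  have cross2 : ∃ a ∈ A, ∃ b ∈ B, b < a := by
    by_contra hcon
    push_neg at hcon
    refine hnot (nested_split h4 huA hvB (A.max' hAne) ?_ ?_ ?_ ?_)
    · exact ((hA _).mp (A.max'_mem hAne)).1
    · exact ((hA _).mp (A.max'_mem hAne)).2.1
    · intro m hm h0
      exact A.le_max' _ (hvalA m hm h0)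
    · intro m hm h0
      exact hcon (A.max' hAne) (A.max'_mem hAne) m.val (hvalB m hm h0)
  by_cases hAB : ∃ c : ℕ, c ∈ A ∧ c ∈ B
  · -- common neighbor case
    obtain ⟨c, hcA, hcB⟩ := hAB
    have hc2 : 2 ≤ c := ((hA c).mp hcA).1
    have hcn : c ≤ n - 2 := ((hA c).mp hcA).2.1
    have huc : G.Adj u (f (c:ℕ)) := ((hA c).mp hcA).2.2
    have hvc : G.Adj v (f (c:ℕ)) := ((hB c).mp hcB).2.2
    have convS0 : ∀ (x : ℕ) (w : G.Walk u v),
        (∀ r, r ∈ w.support ↔ r = u ∨ r = v ∨ r = f ((x:ℕ):ZMod n)) →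
        (∀ r, r ∈ w.support ↔ r = u ∨ r = v ∨ ∃ z : ℕ, x ≤ z ∧ z ≤ x ∧ r = f (z:ℕ)) := by
      intro x w h r
      rw [h r]
      constructor
      · rintro (rfl | rfl | rfl)
        · exact Or.inl rfl
        · exact Or.inr (Or.inl rfl)
        · exact Or.inr (Or.inr ⟨x, le_refl x, le_refl x, rfl⟩)
      · rintro (rfl | rfl | ⟨z, hz1, hz2, rfl⟩)
        · exact Or.inl rfl
        · exact Or.inr (Or.inl rfl)
        · have : z = x := by omega
          subst this
          exact Or.inr (Or.inr rfl)
    obtain ⟨wt, hlt', hst, hit⟩ := mkS0 hemb ((0:ℕ) : ZMod n) hne huv (by simpa using hu0)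
      (by simpa using hv0) hu hv
    obtain ⟨wc, hlc, hsc, hic⟩ := mkS0 hemb ((c:ℕ) : ZMod n) hne huv huc hvc hu hv
    have hnAdj : ∀ z : ℕ, 2 ≤ z → z ≤ n - 2 → z ∉ A → ¬G.Adj u (f (z:ℕ)) := by
      intro z h1 h2 hz hadj
      exact hz ((hA z).mpr ⟨h1, h2, hadj⟩)
    have hnAdjB : ∀ z : ℕ, 2 ≤ z → z ≤ n - 2 → z ∉ B → ¬G.Adj v (f (z:ℕ)) := by
      intro z h1 h2 hz hadj
      exact hz ((hB z).mpr ⟨h1, h2, hadj⟩)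
    have doRight : ∀ a b : ℕ, a ∈ A → b ∈ B → c < a → c < b → ContainsTheta G := by
      intro a b haA hbB hca hcb
      have ha2 : c + 2 ≤ a := distA c a hcA haA hca
      have hb2 : c + 2 ≤ b := distB c b hcB hbB hcb
      have han : a ≤ n - 2 := ((hA a).mp haA).2.1
      have hbn : b ≤ n - 2 := ((hB b).mp hbB).2.1
      rcases le_or_gt a b with hab | hba
      · rcases extract A B (b - a) a b haA hbB hab (le_refl _) with
          ⟨c', hc'A, hc'B, hac', hc'b⟩ | ⟨x, y, hax, hxy, hyb, hxA, hxnB, hyB, hynA, hclean⟩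
        · obtain ⟨wc', hlc', hsc', hic'⟩ := mkS0 hemb ((c':ℕ) : ZMod n) hne huv
            ((hA c').mp hc'A).2.2 ((hB c').mp hc'B).2.2 hu hv
          exact assembleTypeI hemb 0 0 c c c' c' (le_refl 0) (by omega) (le_refl c)
            (by omega) (le_refl c') (by omega) wt wc wc'
            (convS0 0 wt hst) (convS0 c wc hsc) (convS0 c' wc' hsc')
            hit hic hic' (by omega) (by omega) (by omega)
        · obtain ⟨wl, hll, hsl, hil⟩ := mkS1 hemb x y (by omega) hxy (by omega)
            ((hA x).mp hxA).2.2 ((hB y).mp hyB).2.2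
            (fun z h1 h2 => by
              rcases Nat.eq_or_lt_of_le h2 with heq | hlt
              · exact hnAdj z (by omega) (by omega) (by rw [heq]; exact hynA)
              · exact hnAdj z (by omega) (by omega) (hclean z h1 hlt).1)
            (fun z h1 h2 => by
              rcases Nat.eq_or_lt_of_le h1 with heq | hlt
              · exact hnAdjB z (by omega) (by omega) (by rw [← heq]; exact hxnB)
              · exact hnAdjB z (by omega) (by omega) (hclean z hlt h2).2)
            hu hv hne huv
          exact assembleTypeI hemb 0 0 c c x y (le_refl 0) (by omega) (le_refl c)
            (by omega) (by omega) (by omega) wt wc wl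
            (convS0 0 wt hst) (convS0 c wc hsc) hsl
            hit hic hil (by omega) (by omega) hll
      · rcases extract B A (a - b) b a hbB haA (by omega) (le_refl _) with
          ⟨c', hc'B, hc'A, hbc', hc'a⟩ | ⟨x, y, hbx, hxy, hya, hxB, hxnA, hyA, hynB, hclean⟩
        · obtain ⟨wc', hlc', hsc', hic'⟩ := mkS0 hemb ((c':ℕ) : ZMod n) hne huv
            ((hA c').mp hc'A).2.2 ((hB c').mp hc'B).2.2 hu hv
          exact assembleTypeI hemb 0 0 c c c' c' (le_refl 0) (by omega) (le_refl c)
            (by omega) (le_refl c') (by omega) wt wc wc'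
            (convS0 0 wt hst) (convS0 c wc hsc) (convS0 c' wc' hsc')
            hit hic hic' (by omega) (by omega) (by omega)
        · obtain ⟨wl, hll, hsl, hil⟩ := mkS1' hemb x y (by omega) hxy (by omega)
            ((hA y).mp hyA).2.2 ((hB x).mp hxB).2.2
            (fun z h1 h2 => by
              rcases Nat.eq_or_lt_of_le h1 with heq | hlt
              · exact hnAdj z (by omega) (by omega) (by rw [← heq]; exact hxnA)
              · exact hnAdj z (by omega) (by omega) (hclean z hlt h2).2)
            (fun z h1 h2 => by
              rcases Nat.eq_or_lt_of_le h2 with heq | hlt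
              · exact hnAdjB z (by omega) (by omega) (by rw [heq]; exact hynB)
              · exact hnAdjB z (by omega) (by omega) (hclean z h1 hlt).1)
            hu hv hne huv
          exact assembleTypeI hemb 0 0 c c x y (le_refl 0) (by omega) (le_refl c)
            (by omega) (by omega) (by omega) wt wc wl
            (convS0 0 wt hst) (convS0 c wc hsc) hsl
            hit hic hil (by omega) (by omega) hll
    have doLeft : ∀ a b : ℕ, a ∈ A → b ∈ B → a < c → b < c → ContainsTheta G := by
      intro a b haA hbB hca hcb
      have ha2 : a + 2 ≤ c := distA a c haA hcA hca
      have hb2 : b + 2 ≤ c := distB b c hbB hcB hcb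
      have ha2' : 2 ≤ a := ((hA a).mp haA).1
      have hb2' : 2 ≤ b := ((hB b).mp hbB).1
      rcases le_or_gt a b with hab | hba
      · rcases extract A B (b - a) a b haA hbB hab (le_refl _) with
          ⟨c', hc'A, hc'B, hac', hc'b⟩ | ⟨x, y, hax, hxy, hyb, hxA, hxnB, hyB, hynA, hclean⟩
        · obtain ⟨wc', hlc', hsc', hic'⟩ := mkS0 hemb ((c':ℕ) : ZMod n) hne huv
            ((hA c').mp hc'A).2.2 ((hB c').mp hc'B).2.2 hu hv
          exact assembleTypeI hemb 0 0 c' c' c c (le_refl 0) (by omega) (le_refl c')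
            (by omega) (le_refl c) (by omega) wt wc' wc
            (convS0 0 wt hst) (convS0 c' wc' hsc') (convS0 c wc hsc)
            hit hic' hic (by omega) (by omega) (by omega)
        · obtain ⟨wl, hll, hsl, hil⟩ := mkS1 hemb x y (by omega) hxy (by omega)
            ((hA x).mp hxA).2.2 ((hB y).mp hyB).2.2
            (fun z h1 h2 => by
              rcases Nat.eq_or_lt_of_le h2 with heq | hlt
              · exact hnAdj z (by omega) (by omega) (by rw [heq]; exact hynA)
              · exact hnAdj z (by omega) (by omega) (hclean z h1 hlt).1)
            (fun z h1 h2 => by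
              rcases Nat.eq_or_lt_of_le h1 with heq | hlt
              · exact hnAdjB z (by omega) (by omega) (by rw [← heq]; exact hxnB)
              · exact hnAdjB z (by omega) (by omega) (hclean z hlt h2).2)
            hu hv hne huv
          exact assembleTypeI hemb 0 0 x y c c (le_refl 0) (by omega) (by omega)
            (by omega) (le_refl c) (by omega) wt wl wc
            (convS0 0 wt hst) hsl (convS0 c wc hsc)
            hit hil hic (by omega) hll (by omega)
      · rcases extract B A (a - b) b a hbB haA (by omega) (le_refl _) with
          ⟨c', hc'B, hc'A, hbc', hc'a⟩ | ⟨x, y, hbx, hxy, hya, hxB, hxnA, hyA, hynB, hclean⟩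
        · obtain ⟨wc', hlc', hsc', hic'⟩ := mkS0 hemb ((c':ℕ) : ZMod n) hne huv
            ((hA c').mp hc'A).2.2 ((hB c').mp hc'B).2.2 hu hv
          exact assembleTypeI hemb 0 0 c' c' c c (le_refl 0) (by omega) (le_refl c')
            (by omega) (le_refl c) (by omega) wt wc' wc
            (convS0 0 wt hst) (convS0 c' wc' hsc') (convS0 c wc hsc)
            hit hic' hic (by omega) (by omega) (by omega)
        · obtain ⟨wl, hll, hsl, hil⟩ := mkS1' hemb x y (by omega) hxy (by omega)
            ((hA y).mp hyA).2.2 ((hB x).mp hxB).2.2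
            (fun z h1 h2 => by
              rcases Nat.eq_or_lt_of_le h1 with heq | hlt
              · exact hnAdj z (by omega) (by omega) (by rw [← heq]; exact hxnA)
              · exact hnAdj z (by omega) (by omega) (hclean z hlt h2).2)
            (fun z h1 h2 => by
              rcases Nat.eq_or_lt_of_le h2 with heq | hlt
              · exact hnAdjB z (by omega) (by omega) (by rw [heq]; exact hynB)
              · exact hnAdjB z (by omega) (by omega) (hclean z h1 hlt).1)
            hu hv hne huv
          exact assembleTypeI hemb 0 0 x y c c (le_refl 0) (by omega) (by omega)
            (by omega) (le_refl c) (by omega) wt wl wc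
            (convS0 0 wt hst) hsl (convS0 c wc hsc)
            hit hil hic (by omega) hll (by omega)
    obtain ⟨a0, ha0A, ha0ne⟩ := Finset.exists_mem_ne (by omega) c (s := A)
    obtain ⟨b0, hb0B, hb0ne⟩ := Finset.exists_mem_ne (by omega) c (s := B)
    rcases lt_or_gt_of_ne ha0ne with ha0 | ha0 <;> rcases lt_or_gt_of_ne hb0ne with hb0 | hb0
    · exact doLeft a0 b0 ha0A hb0B ha0 hb0
    · by_cases hLA : ∃ a ∈ A, c < a
      · obtain ⟨a1, ha1A, ha1⟩ := hLA
        exact doRight a1 b0 ha1A hb0B ha1 hb0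
      · by_cases hLB : ∃ b' ∈ B, b' < c
        · obtain ⟨b1, hb1B, hb1⟩ := hLB
          exact doLeft a0 b1 ha0A hb1B ha0 hb1
        · push_neg at hLA hLB
          exact absurd (nested_split h4 huA hvB c hc2 hcn
            (fun m hm h0 => hLA m.val (hvalA m hm h0))
            (fun m hm h0 => hLB m.val (hvalB m hm h0))) hnot
    · by_cases hRB : ∃ b' ∈ B, c < b'
      · obtain ⟨b1, hb1B, hb1⟩ := hRB
        exact doRight a0 b1 ha0A hb1B ha0 hb1
      · by_cases hLA : ∃ a ∈ A, a < c
        · obtain ⟨a1, ha1A, ha1⟩ := hLA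
          exact doLeft a1 b0 ha1A hb0B ha1 hb0
        · push_neg at hRB hLA
          exact absurd (nested_split' h4 huA hvB c hc2 hcn
            (fun m hm h0 => hLA m.val (hvalA m hm h0))
            (fun m hm h0 => hRB m.val (hvalB m hm h0))) hnot
    · exact doRight a0 b0 ha0A hb0B ha0 hb0
  · -- disjoint case
    push_neg at hAB
    have hdisj : ∀ c : ℕ, ¬(c ∈ A ∧ c ∈ B) := fun c h => hAB c h.1 h.2
    rcases lt_trichotomy (A.min' hAne) (B.min' hBne) with hlt | heq | hgt
    · exact key2 hemb hTri hu hv hne huv hu0 hv0 A B hA hB hdisj hAne hBne hlt cross2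
    · refine absurd ?_ (hdisj (A.min' hAne))
      exact ⟨A.min'_mem hAne, by rw [heq]; exact B.min'_mem hBne⟩
    · refine key2 hemb hTri hv hu hne.symm (fun h => huv h.symm) hv0 hu0 B A hB hA
        (fun c h => hAB c h.2 h.1) hBne hAne hgt ?_
      obtain ⟨a, haA, b, hbB, hab⟩ := cross1
      exact ⟨b, hbB, a, haA, hab⟩

end ThetaAux
open ThetaAux

/-- In a (theta, triangle)-free graph, if a 2-wheel with non-adjacent
centers is not nested, then the centers have no common neighbor on the rim. -/
theorem statement5 (G : SimpleGraph V) (hTheta : ¬ContainsTheta G) (hTri : G.CliqueFree 3)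
    (n : ℕ) (f : ZMod n → V) (u v : V)
    (hW : Is2WheelCfg G n f u v) (huv : ¬G.Adj u v)
    (hnot : ¬NestedCfg G n f u v) :
    ∀ m : ZMod n, ¬(G.Adj u (f m) ∧ G.Adj v (f m)) := by
  rintro m ⟨hum, hvm⟩
  obtain ⟨hemb, hne, hu, hv, hAcard, hBcard⟩ := hW
  have h4 := hemb.1
  haveI : NeZero n := ⟨by omega⟩
  set g : ZMod n → V := fun i => f (m + i) with hgdef
  have hgemb : IsHoleEmb G n g := by
    refine ⟨h4, fun i j h => add_left_cancel (hemb.2.1 h), fun i j => ?_⟩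
    rw [hgdef]
    simp only []
    rw [hemb.2.2 (m+i) (m+j)]
    constructor
    · rintro (h | h)
      · exact Or.inl (add_left_cancel (h.trans (add_assoc m i 1)))
      · exact Or.inr (add_left_cancel (h.trans (add_assoc m j 1)))
    · rintro (h | h)
      · exact Or.inl (by rw [h]; ring)
      · exact Or.inr (by rw [h]; ring)
  have hu' : u ∉ Set.range g := by
    rintro ⟨i, hi⟩
    exact hu ⟨m + i, hi⟩
  have hv' : v ∉ Set.range g := by
    rintro ⟨i, hi⟩
    exact hv ⟨m + i, hi⟩
  have hsets : ∀ w : V, {j : ZMod n | G.Adj w (f j)} = (fun i => m + i) '' {i : ZMod n | G.Adj w (g i)} := by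
    intro w
    ext j
    constructor
    · intro hj
      exact ⟨j - m, by simp only [hgdef, Set.mem_setOf_eq, add_sub_cancel]; exact hj, add_sub_cancel m j⟩
    · rintro ⟨i, hi, rfl⟩
      exact hi
  have hcardg : ∀ w : V, {i : ZMod n | G.Adj w (g i)}.ncard = {j : ZMod n | G.Adj w (f j)}.ncard := by
    intro w
    rw [hsets w, Set.ncard_image_of_injective _ (add_right_injective m)]
  have hg0u : G.Adj u (g 0) := by
    simp only [hgdef, add_zero]
    exact hum
  have hg0v : G.Adj v (g 0) := by
    simp only [hgdef, add_zero]
    exact hvm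
  have hnot' : ¬NestedCfg G n g u v := by
    rintro ⟨i, d, h1, h2, hnu, hnv⟩
    refine hnot ⟨m + i, d, h1, h2, ?_, ?_⟩
    · intro m' hm'
      have : G.Adj u (g (m' - m)) := by
        simp only [hgdef, add_sub_cancel]
        exact hm'
      obtain ⟨e, he, heq⟩ := hnu (m' - m) this
      refine ⟨e, he, ?_⟩
      have : m' = m + (i + e) := by rw [← heq]; ring
      rw [this]; ring
    · intro m' hm'
      have : G.Adj v (g (m' - m)) := by
        simp only [hgdef, add_sub_cancel]
        exact hm'
      obtain ⟨e, he, heq⟩ := hnv (m' - m) this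
      refine ⟨e, he, ?_⟩
      have : m' = m + (i + d + e) := by rw [← heq]; ring
      rw [this]; ring
  exact hTheta (key hgemb hTri hu' hv' hne huv hg0u hg0v
    (by rw [hcardg u]; exact hAcard) (by rw [hcardg v]; exact hBcard) hnot')
end
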